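/- arXiv:2208.09882 — 4 statements merged into one kernel-verified Lean document; each statement's English description precedes it below -/
import Mathlib

section
/- Let μ ≥ 1, ℓ ≥ 0, m ≥ 0 be integers, set M = 2ℓ + 6m + 3 and σ = −(2ℓ + 4m + 2)·k. Then for every κ ∈ {0,1}, every λ ∈ {0,1}, and every integer k with gcd(k, M) = 1, one has H_M( q^σ · f((−1)^κ q^k, (−1)^κ q^{μM−k})^{2ℓ} · ( f(−q^{2k}, −q^{μM−2k}) / f((−1)^λ q^k, (−1)^λ q^{μM−k}) )^{2m+1} ) = 0. -/
/-!
Common setup: Ramanujan theta series as formal Laurent series over `ℚ`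
(`LaurentSeries ℚ = HahnSeries ℤ ℚ`), and the huffing operator `H_M`.
-/

noncomputable section

open scoped Classical

namespace ThetaVanish

/-- A subset of `ℤ` that is bounded below is partially well-ordered. -/
theorem isPWO_of_subset_Ici {a : ℤ} {s : Set ℤ} (h : s ⊆ Set.Ici a) : s.IsPWO := by
  have hWF : s.IsWF := by
    rw [Set.isWF_iff_no_descending_seq]
    intro f hf hmem
    have key : ∀ n : ℕ, f n + n ≤ f 0 := by
      intro n
      induction n with
      | zero => simp
      | succ k ih =>
        have h2 : f (k + 1) < f k := hf (Nat.lt_succ_self k)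
        push_cast
        push_cast at ih
        omega
    have h1 := key (f 0 - a + 1).toNat
    have h2 : a ≤ f ((f 0 - a + 1).toNat) := h (hmem _)
    have h3 : a ≤ f 0 := h (hmem 0)
    omega
  exact hWF.isPWO

/-- The coefficient of `q^N` in Ramanujan's theta series `f(ε q^r, ε q^s)`:
the (finite, when `r + s > 0`) sum of `ε^n` over all integers `n` with
`r·n(n+1)/2 + s·n(n-1)/2 = N`. -/
def thetaCoeff (ε r s : ℤ) : ℤ → ℚ := fun N =>
  ∑ᶠ n : ℤ, if r * (n * (n + 1) / 2) + s * (n * (n - 1) / 2) = N then (ε : ℚ) ^ n else 0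

theorem thetaCoeff_support (ε r s : ℤ) (h : 0 < r + s) :
    Function.support (thetaCoeff ε r s) ⊆ Set.Ici (-(r - s) ^ 2) := by
  intro N hN
  simp only [Function.mem_support, ne_eq] at hN
  rw [Set.mem_Ici]
  by_contra hcon
  push_neg at hcon
  apply hN
  apply finsum_eq_zero_of_forall_eq_zero
  intro n
  rw [if_neg]
  intro hQ
  obtain ⟨c, hc⟩ := Int.even_mul_succ_self n
  obtain ⟨e, he⟩ := Int.even_mul_pred_self n
  have hc' : n * (n + 1) = 2 * c := by omega
  have he' : n * (n - 1) = 2 * e := by omega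
  have e1 : n * (n + 1) / 2 = c := by omega
  have e2 : n * (n - 1) / 2 = e := by omega
  rw [e1, e2] at hQ
  have key : 2 * N = (r + s) * n ^ 2 + (r - s) * n := by
    linear_combination -2 * hQ - r * hc' - s * he'
  nlinarith [sq_nonneg (2 * n + r - s), sq_nonneg (r - s),
    mul_nonneg (show (0:ℤ) ≤ r + s - 1 by omega) (sq_nonneg n)]

/-- Ramanujan's theta series `f(ε q^r, ε q^s)` (for a sign `ε ∈ {1, -1}` and
`r + s > 0`), as a formal Laurent series over `ℚ`; junk value `0` if `r + s ≤ 0`. -/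
def theta (ε r s : ℤ) : LaurentSeries ℚ :=
  if h : 0 < r + s then
    { coeff := thetaCoeff ε r s
      isPWO_support' := isPWO_of_subset_Ici (thetaCoeff_support ε r s h) }
  else 0

/-- The huffing operator `H_M`: keep only the coefficients whose index is a
multiple of `M`. -/
def huff (M : ℤ) (G : LaurentSeries ℚ) : LaurentSeries ℚ where
  coeff N := if M ∣ N then G.coeff N else 0
  isPWO_support' := by
    apply Set.IsPWO.mono G.isPWO_support
    intro N hN
    simp only [Function.mem_support, ne_eq] at hN
    rw [HahnSeries.mem_support]
    by_cases hd : M ∣ N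
    · rwa [if_pos hd] at hN
    · exact absurd (if_neg hd) hN




/-- Lattice representation of a Laurent series. -/
structure Rep (α : Type) where
  e : α → ℤ
  s : α → ℚ
  bound : ℤ
  hb : ∀ x, bound ≤ e x
  hfin : ∀ N : ℤ, {x | e x = N}.Finite

namespace Rep

variable {α β : Type}

def fib (R : Rep α) (N : ℤ) : Finset α := (R.hfin N).toFinset

lemma mem_fib {R : Rep α} {N : ℤ} {x : α} : x ∈ R.fib N ↔ R.e x = N := by
  simp [fib]

def Represents (R : Rep α) (G : LaurentSeries ℚ) : Prop :=
  ∀ N, G.coeff N = ∑ x ∈ R.fib N, R.s x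

lemma rangePWO (R : Rep α) : (Set.range R.e).IsPWO :=
  isPWO_of_subset_Ici (a := R.bound) (by rintro _ ⟨x, rfl⟩; exact R.hb x)

lemma Represents.support_subset {R : Rep α} {G : LaurentSeries ℚ} (h : R.Represents G) :
    G.support ⊆ Set.range R.e := by
  intro N hN
  rw [HahnSeries.mem_support] at hN
  by_contra hc
  apply hN
  rw [h N]
  have hfib : R.fib N = ∅ :=
    Finset.eq_empty_of_forall_notMem (fun x hx => hc ⟨x, mem_fib.1 hx⟩)
  rw [hfib, Finset.sum_empty]

def mul (R₁ : Rep α) (R₂ : Rep β) : Rep (α × β) where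
  e p := R₁.e p.1 + R₂.e p.2
  s p := R₁.s p.1 * R₂.s p.2
  bound := R₁.bound + R₂.bound
  hb p := add_le_add (R₁.hb _) (R₂.hb _)
  hfin N := by
    apply Set.Finite.subset ((Set.finite_Icc R₁.bound (N - R₂.bound)).biUnion
      (fun i _ => ((R₁.hfin i).prod (R₂.hfin (N - i)))))
    intro p hp
    simp only [Set.mem_setOf_eq] at hp
    have h1 := R₁.hb p.1
    have h2 := R₂.hb p.2
    refine Set.mem_biUnion (Set.mem_Icc.2 ⟨h1, by omega⟩) ?_
    constructor
    · rfl
    · simp only [Set.mem_setOf_eq]; omega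

lemma Represents.mul {R₁ : Rep α} {R₂ : Rep β} {G₁ G₂ : LaurentSeries ℚ}
    (h₁ : R₁.Represents G₁) (h₂ : R₂.Represents G₂) :
    (R₁.mul R₂).Represents (G₁ * G₂) := by
  intro N
  have hS₁ := R₁.rangePWO
  have hS₂ := R₂.rangePWO
  have step1 : (G₁ * G₂).coeff N =
      ∑ ij ∈ Finset.addAntidiagonal hS₁ hS₂ N, G₁.coeff ij.1 * G₂.coeff ij.2 := by
    rw [HahnSeries.coeff_mul_left' hS₁ h₁.support_subset]
    refine Finset.sum_subset (Finset.addAntidiagonal_mono_right h₂.support_subset) ?_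
    intro ij hmem hnot
    replace hmem := Finset.mem_addAntidiagonal.1 hmem
    by_cases h : G₂.coeff ij.2 = 0
    · simp [h]
    · exact absurd (Finset.mem_addAntidiagonal.2 ⟨hmem.1, h, hmem.2.2⟩) hnot
  rw [step1]
  have hmaps : ∀ p ∈ (R₁.mul R₂).fib N,
      (R₁.e p.1, R₂.e p.2) ∈ Finset.addAntidiagonal hS₁ hS₂ N := by
    intro p hp
    rw [mem_fib] at hp
    exact Finset.mem_addAntidiagonal.2 ⟨⟨p.1, rfl⟩, ⟨p.2, rfl⟩, hp⟩
  rw [show (∑ x ∈ (R₁.mul R₂).fib N, (R₁.mul R₂).s x) =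
      ∑ p ∈ (R₁.mul R₂).fib N, R₁.s p.1 * R₂.s p.2 from rfl]
  rw [← Finset.sum_fiberwise_of_maps_to hmaps (fun p => R₁.s p.1 * R₂.s p.2)]
  refine Finset.sum_congr rfl ?_
  intro ij hij
  replace hij := Finset.mem_addAntidiagonal.1 hij
  rw [h₁ ij.1, h₂ ij.2, Finset.sum_mul_sum, ← Finset.sum_product']
  refine (Finset.sum_congr ?_ (fun _ _ => rfl)).symm
  ext p
  constructor
  · intro hp
    rw [Finset.mem_filter] at hp
    obtain ⟨hmem, heq⟩ := hp
    have h1 : R₁.e p.1 = ij.1 := congrArg Prod.fst heq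
    have h2 : R₂.e p.2 = ij.2 := congrArg Prod.snd heq
    rw [Finset.mem_product]
    exact ⟨mem_fib.2 h1, mem_fib.2 h2⟩
  · intro hp
    rw [Finset.mem_product] at hp
    have h1 : R₁.e p.1 = ij.1 := mem_fib.1 hp.1
    have h2 : R₂.e p.2 = ij.2 := mem_fib.1 hp.2
    rw [Finset.mem_filter]
    refine ⟨mem_fib.2 ?_, by rw [h1, h2]⟩
    show R₁.e p.1 + R₂.e p.2 = N
    rw [h1, h2]
    exact hij.2.2

def reindex (R : Rep α) (φ : β ≃ α) : Rep β where
  e := R.e ∘ φ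
  s := R.s ∘ φ
  bound := R.bound
  hb x := R.hb _
  hfin N := Set.Finite.preimage (φ.injective.injOn) (R.hfin N)

lemma Represents.reindex {R : Rep α} {G : LaurentSeries ℚ} (h : R.Represents G) (φ : β ≃ α) :
    (R.reindex φ).Represents G := by
  intro N
  rw [h N]
  refine Finset.sum_bij' (fun x _ => φ.symm x) (fun y _ => φ y) ?_ ?_ ?_ ?_ ?_
  · intro a ha
    rw [mem_fib] at ha ⊢
    simpa [Rep.reindex] using ha
  · intro a ha
    rw [mem_fib] at ha ⊢
    simpa [Rep.reindex] using ha
  · intro a _; simp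
  · intro a _; simp
  · intro a _; simp [Rep.reindex]

/-- The representation of `single σ 1` (also used for `1 = single 0 1` via `σ = 0`). -/
def singleRep (σ : ℤ) (α : Type) : Rep (Fin 0 → α) where
  e _ := σ
  s _ := 1
  bound := σ
  hb _ := le_refl σ
  hfin N := Set.toFinite _

lemma represents_single (σ : ℤ) (α : Type) :
    (singleRep σ α).Represents (HahnSeries.single σ (1 : ℚ)) := by
  intro N
  rw [HahnSeries.coeff_single]
  by_cases hN : N = σ
  · subst hN
    have : (singleRep N α).fib N = {(fun i => i.elim0 : Fin 0 → α)} := by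
      ext x
      simp only [mem_fib, Finset.mem_singleton]
      constructor
      · intro _; funext i; exact i.elim0
      · intro _; rfl
    rw [if_pos rfl, this, Finset.sum_singleton]
    rfl
  · rw [if_neg hN]
    have : (singleRep σ α).fib N = ∅ := by
      ext x
      simp only [mem_fib, Finset.notMem_empty, iff_false]
      intro hx
      exact hN (hx.symm : N = σ)
    rw [this, Finset.sum_empty]

def pow {α : Type} (R : Rep α) : (p : ℕ) → Rep (Fin p → α)
  | 0 => singleRep 0 α
  | p + 1 => (R.mul (R.pow p)).reindex (Fin.consEquiv (fun _ => α)).symm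

lemma represents_one (α : Type) : (singleRep 0 α).Represents 1 := by
  have h := represents_single 0 α
  intro N
  rw [← HahnSeries.single_zero_one]
  exact h N

lemma Represents.pow {α : Type} {R : Rep α} {G : LaurentSeries ℚ} (h : R.Represents G) (p : ℕ) :
    (R.pow p).Represents (G ^ p) := by
  induction p with
  | zero => rw [pow_zero]; exact represents_one α
  | succ p ih =>
    rw [pow_succ']
    exact (h.mul ih).reindex _

lemma pow_e {α : Type} (R : Rep α) (p : ℕ) (v : Fin p → α) :
    (R.pow p).e v = ∑ i, R.e (v i) := by
  induction p with
  | zero => simp [pow, singleRep]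
  | succ p ih =>
    show R.e _ + (R.pow p).e _ = _
    rw [ih]
    rw [Fin.sum_univ_succ]
    rfl

lemma pow_s {α : Type} (R : Rep α) (p : ℕ) (v : Fin p → α) :
    (R.pow p).s v = ∏ i, R.s (v i) := by
  induction p with
  | zero => simp [pow, singleRep]
  | succ p ih =>
    show R.s _ * (R.pow p).s _ = _
    rw [ih]
    rw [Fin.prod_univ_succ]
    rfl

end Rep

/-- `QL x = x(x-1)/2` -/
def QL (x : ℤ) : ℤ := x * (x - 1) / 2

lemma QL_eq (x : ℤ) : 2 * QL x = x * (x - 1) := by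
  obtain ⟨c, hc⟩ := Int.even_mul_pred_self x
  unfold QL
  omega

lemma QL_shift (p x : ℤ) : QL (p - x) = QL x + (1 - p) * x + QL p := by
  have h1 := QL_eq (p - x)
  have h2 := QL_eq x
  have h3 := QL_eq p
  have h4 : (p - x) * (p - x - 1) = x * (x - 1) + 2 * ((1 - p) * x) + p * (p - 1) := by ring
  omega

/-- theta exponent function -/
def eTh (r s : ℤ) (n : ℤ) : ℤ := r * (n * (n + 1) / 2) + s * (n * (n - 1) / 2)

lemma eTh_eq (r s n : ℤ) : eTh r s n = (r + s) * QL n + r * n := by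
  have h1 : n * (n + 1) / 2 = QL n + n := by
    obtain ⟨c, hc⟩ := Int.even_mul_pred_self n
    have h2 : n * (n + 1) = n * (n - 1) + 2 * n := by ring
    unfold QL
    omega
  have h0 : n * (n - 1) / 2 = QL n := rfl
  unfold eTh
  rw [h1, h0]
  ring

lemma eTh_doubled (r s n : ℤ) : 2 * eTh r s n = (r + s) * n ^ 2 + (r - s) * n := by
  have h1 := QL_eq n
  rw [eTh_eq]
  linear_combination (r + s) * h1

lemma eTh_bound (r s n : ℤ) (h : 0 < r + s) : -(r - s) ^ 2 ≤ eTh r s n := by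
  have h1 := eTh_doubled r s n
  nlinarith [sq_nonneg (2 * n + (r - s)), sq_nonneg (r - s), sq_nonneg n,
    mul_nonneg (show (0:ℤ) ≤ r + s - 1 by omega) (sq_nonneg n)]

lemma eTh_fiber_finite (r s : ℤ) (h : 0 < r + s) (N : ℤ) : {n : ℤ | eTh r s n = N}.Finite := by
  set c := r - s with hc
  have hcc : 0 ≤ c * (c + 1) := by nlinarith [sq_nonneg (2 * c + 1)]
  have hcc' : 0 ≤ c * (c - 1) := by nlinarith [sq_nonneg (2 * c - 1)]
  apply Set.Finite.subset (Set.finite_Icc (-(2 * N ^ 2 + c ^ 2 + 3)) (2 * N ^ 2 + c ^ 2 + 3))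
  intro n hn
  simp only [Set.mem_setOf_eq] at hn
  have hE : (r + s) * n ^ 2 + c * n = 2 * N := by
    rw [← eTh_doubled, hn]
  rw [Set.mem_Icc]
  constructor
  · by_contra hcon
    push_neg at hcon
    have hn0 : n < 0 := by nlinarith [sq_nonneg N]
    have h1 : 0 ≤ (-n - (c ^ 2 + 2)) * (-n) := by
      apply mul_nonneg
      · nlinarith [sq_nonneg N]
      · omega
    nlinarith [mul_nonneg (show (0:ℤ) ≤ r + s - 1 by omega) (sq_nonneg n), sq_nonneg N,
      mul_nonneg hcc' (show (0:ℤ) ≤ -n by omega)]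
  · by_contra hcon
    push_neg at hcon
    have hn0 : 0 < n := by nlinarith [sq_nonneg N]
    have h1 : 0 ≤ (n - (c ^ 2 + 2)) * n := by
      apply mul_nonneg
      · nlinarith [sq_nonneg N]
      · omega
    nlinarith [mul_nonneg (show (0:ℤ) ≤ r + s - 1 by omega) (sq_nonneg n), sq_nonneg N,
      mul_nonneg hcc (show (0:ℤ) ≤ n by omega)]


/-- the representation of a theta series -/
def thetaRep (ε r s : ℤ) (h : 0 < r + s) : Rep ℤ where
  e := eTh r s
  s n := (ε : ℚ) ^ n
  bound := -(r - s) ^ 2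
  hb n := eTh_bound r s n h
  hfin := eTh_fiber_finite r s h

lemma theta_represents (ε r s : ℤ) (h : 0 < r + s) :
    (thetaRep ε r s h).Represents (theta ε r s) := by
  intro N
  have hco : (theta ε r s).coeff N = thetaCoeff ε r s N := by
    rw [theta, dif_pos h]
  rw [hco, thetaCoeff]
  rw [finsum_eq_finset_sum_of_support_subset _
    (s := (thetaRep ε r s h).fib N) ?_]
  · refine Finset.sum_congr rfl ?_
    intro x hx
    rw [Rep.mem_fib] at hx
    have hx' : r * (x * (x + 1) / 2) + s * (x * (x - 1) / 2) = N := hx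
    rw [if_pos hx']
    rfl
  · intro x hx
    rw [Function.mem_support] at hx
    rw [Finset.mem_coe, Rep.mem_fib]
    by_contra hne
    exact hx (if_neg hne)

/-- Supported: all coefficients are at indices divisible by M -/
def Supported (M : ℤ) (G : LaurentSeries ℚ) : Prop := ∀ N, ¬ M ∣ N → G.coeff N = 0

lemma huff_coeff (M : ℤ) (G : LaurentSeries ℚ) (N : ℤ) :
    (huff M G).coeff N = if M ∣ N then G.coeff N else 0 := rfl

lemma huff_eq_self {M : ℤ} {G : LaurentSeries ℚ} (h : Supported M G) : huff M G = G := by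
  ext N
  rw [huff_coeff]
  by_cases hd : M ∣ N
  · rw [if_pos hd]
  · rw [if_neg hd, h N hd]

lemma supported_of_huff_eq {M : ℤ} {G : LaurentSeries ℚ} (h : huff M G = G) : Supported M G := by
  intro N hd
  rw [← h, huff_coeff, if_neg hd]

lemma huff_mul_supported (M : ℤ) (X Z : LaurentSeries ℚ) (hZ : Supported M Z) :
    huff M (X * Z) = huff M X * Z := by
  have hsub : (huff M X).support ⊆ X.support := by
    intro i hi
    rw [HahnSeries.mem_support] at hi ⊢
    intro h0
    apply hi
    rw [huff_coeff, h0]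
    simp
  have hL : (X * Z).coeff = fun N => ∑ ij ∈ Finset.addAntidiagonal X.isPWO_support Z.isPWO_support N,
      X.coeff ij.1 * Z.coeff ij.2 := by
    funext N
    exact HahnSeries.coeff_mul
  ext N
  have hR : (huff M X * Z).coeff N = ∑ ij ∈ Finset.addAntidiagonal X.isPWO_support Z.isPWO_support N,
      (huff M X).coeff ij.1 * Z.coeff ij.2 := HahnSeries.coeff_mul_left' X.isPWO_support hsub
  rw [huff_coeff, hR]
  by_cases hMN : M ∣ N
  · rw [if_pos hMN]
    rw [show (X * Z).coeff N = _ from congrFun hL N]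
    refine Finset.sum_congr rfl ?_
    intro ij hij
    replace hij := Finset.mem_addAntidiagonal.1 hij
    have hj : M ∣ ij.2 := by
      by_contra hc
      exact hij.2.1 (hZ ij.2 hc)
    have hi : M ∣ ij.1 := by
      have h12 : ij.1 = N - ij.2 := by omega
      rw [h12]
      exact dvd_sub hMN hj
    rw [huff_coeff, if_pos hi]
  · rw [if_neg hMN]
    symm
    apply Finset.sum_eq_zero
    intro ij hij
    replace hij := Finset.mem_addAntidiagonal.1 hij
    have hj : M ∣ ij.2 := by
      by_contra hc
      exact hij.2.1 (hZ ij.2 hc)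
    have hi : ¬ M ∣ ij.1 := by
      intro hc
      apply hMN
      rw [show N = ij.1 + ij.2 from hij.2.2.symm]
      exact dvd_add hc hj
    rw [huff_coeff, if_neg hi, zero_mul]


lemma Supported.mul {M : ℤ} {X Z : LaurentSeries ℚ} (hX : Supported M X) (hZ : Supported M Z) :
    Supported M (X * Z) := by
  apply supported_of_huff_eq
  rw [huff_mul_supported M X Z hZ, huff_eq_self hX]

lemma Supported.one {M : ℤ} : Supported M (1 : LaurentSeries ℚ) := by
  intro N hd
  rw [HahnSeries.coeff_one]
  have : N ≠ 0 := by
    intro h0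
    exact hd (h0 ▸ dvd_zero M)
  rw [if_neg this]

lemma Supported.pow {M : ℤ} {X : LaurentSeries ℚ} (hX : Supported M X) (p : ℕ) :
    Supported M (X ^ p) := by
  induction p with
  | zero => simpa using Supported.one
  | succ p ih => rw [pow_succ]; exact ih.mul hX

lemma Supported.inv {M : ℤ} {G : LaurentSeries ℚ} (hG : Supported M G) : Supported M G⁻¹ := by
  by_cases h0 : G = 0
  · rw [h0, inv_zero]
    intro N _
    rfl
  · have h1 : huff M (G⁻¹ * G) = huff M G⁻¹ * G := huff_mul_supported M _ G hG
    rw [inv_mul_cancel₀ h0] at h1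
    have h2 : huff M (1 : LaurentSeries ℚ) = 1 := huff_eq_self Supported.one
    have h3 : huff M G⁻¹ * G = 1 := by rw [← h1, h2]
    have h4 : huff M G⁻¹ = G⁻¹ := by
      have := mul_right_cancel₀ h0 (h3.trans (inv_mul_cancel₀ h0).symm)
      exact this
    exact supported_of_huff_eq h4

lemma huff_zero (M : ℤ) : huff M (0 : LaurentSeries ℚ) = 0 := by
  ext N
  rw [huff_coeff]
  simp



/-! ### Sign helpers -/

lemma pm_ne_zero {η : ℚ} (hη : η = 1 ∨ η = -1) : η ≠ 0 := by
  rcases hη with h | h <;> rw [h] <;> norm_num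

lemma pm_zpow_add {η : ℚ} (hη : η = 1 ∨ η = -1) (x y : ℤ) :
    η ^ (x + y) = η ^ x * η ^ y := zpow_add₀ (pm_ne_zero hη) x y

lemma pm_zpow_even {η : ℚ} (hη : η = 1 ∨ η = -1) {x : ℤ} (hx : Even x) : η ^ x = 1 := by
  obtain ⟨c, rfl⟩ := hx
  rw [show c + c = 2 * c by ring, zpow_mul]
  rcases hη with h | h <;> rw [h] <;> norm_num

lemma pm_zpow_neg {η : ℚ} (hη : η = 1 ∨ η = -1) (x : ℤ) : η ^ (-x) = η ^ x := by
  have h1 : η ^ (-x) * η ^ x = 1 := by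
    rw [← pm_zpow_add hη]
    simp
  have h2 : η ^ x * η ^ x = 1 := by
    rw [← pm_zpow_add hη]
    exact pm_zpow_even hη ⟨x, rfl⟩
  calc η ^ (-x) = η ^ (-x) * (η ^ x * η ^ x) := by rw [h2, mul_one]
    _ = (η ^ (-x) * η ^ x) * η ^ x := by ring
    _ = η ^ x := by rw [h1, one_mul]

lemma pm_zpow_sub {η : ℚ} (hη : η = 1 ∨ η = -1) (x y : ℤ) :
    η ^ (x - y) = η ^ x * η ^ y := by
  rw [sub_eq_add_neg, pm_zpow_add hη, pm_zpow_neg hη]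

lemma pm_zpow_pm {η : ℚ} (hη : η = 1 ∨ η = -1) (x : ℤ) : η ^ x = 1 ∨ η ^ x = -1 := by
  rcases hη with h | h
  · left; rw [h, one_zpow]
  · subst h
    rcases Int.even_or_odd x with he | ho
    · left; exact pm_zpow_even (Or.inr rfl) he
    · right
      obtain ⟨c, rfl⟩ := ho
      rw [pm_zpow_add (Or.inr rfl), pm_zpow_even (Or.inr rfl) ⟨c, by ring⟩, one_mul, zpow_one]

lemma neg_one_zpow_odd {x : ℤ} (hx : Odd x) : (-1 : ℚ) ^ x = -1 := by
  obtain ⟨c, rfl⟩ := hx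
  rw [pm_zpow_add (Or.inr rfl), pm_zpow_even (Or.inr rfl) ⟨c, by ring⟩, one_mul, zpow_one]

lemma neg_one_sum_zero {x y : ℤ} (h : Odd (x + y)) : (-1 : ℚ) ^ x + (-1 : ℚ) ^ y = 0 := by
  have h1 : (-1 : ℚ) ^ x * (-1 : ℚ) ^ y = -1 := by
    rw [← pm_zpow_add (Or.inr rfl), neg_one_zpow_odd h]
  rcases pm_zpow_pm (Or.inr rfl) x with h2 | h2 <;> rw [h2] at h1 ⊢ <;> linarith

/-! ### Exponent normal forms -/

lemma eTh_kt (kk t x : ℤ) : eTh kk (t - kk) x = t * QL x + kk * x := by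
  rw [eTh_eq]
  ring_nf

lemma eTh_tt (t v : ℤ) : eTh t t v = t * v ^ 2 := by
  have h := eTh_doubled t t v
  linarith

lemma eTh_t3t (t j : ℤ) : eTh t (3 * t) j = 4 * t * QL j + t * j := by
  rw [eTh_eq]
  ring_nf

lemma eTh_2k (k t p : ℤ) : eTh (2 * k) (2 * t - 2 * k) p = 2 * t * QL p + 2 * k * p := by
  rw [eTh_eq]
  ring_nf

lemma eTh_D (k t z : ℤ) : eTh (t - 2 * k) (t + 2 * k) z = 2 * t * QL z + (t - 2 * k) * z := by
  rw [eTh_eq]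
  ring_nf

lemma eTh_B (k t n : ℤ) : eTh (2 * k) (t - 2 * k) n = t * QL n + 2 * k * n := by
  rw [eTh_eq]
  ring_nf

lemma QL_pair (p v : ℤ) : QL (p + v) + QL (p - v) = 2 * QL p + v ^ 2 := by
  have h1 := QL_eq (p + v)
  have h2 := QL_eq (p - v)
  have h3 := QL_eq p
  have h4 : (p + v) * (p + v - 1) + (p - v) * (p - v - 1) = 2 * (p * (p - 1)) + 2 * v ^ 2 := by
    ring
  nlinarith [h1, h2, h3, h4]

/-! ### Identity P1 : `f(εq^k, εq^{t-k}) f(-εq^k, -εq^{t-k}) = f(-q^{2k}, -q^{2t-2k}) φ(-q^t)` -/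

lemma identity_P1 (ε k t : ℤ) (ht : 0 < t) (hε : (ε : ℚ) = 1 ∨ (ε : ℚ) = -1) :
    theta ε k (t - k) * theta (-ε) k (t - k)
      = theta (-1) (2 * k) (2 * t - 2 * k) * theta (-1) t t := by
  have h1 : 0 < k + (t - k) := by omega
  have h2 : 0 < 2 * k + (2 * t - 2 * k) := by omega
  have h3 : 0 < t + t := by omega
  have hεn : ((-ε : ℤ) : ℚ) = -(ε : ℚ) := by push_cast; ring
  have hLrep := Rep.Represents.mul (theta_represents ε k (t - k) h1)
    (theta_represents (-ε) k (t - k) h1)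
  have hRrep := Rep.Represents.mul (theta_represents (-1) (2 * k) (2 * t - 2 * k) h2)
    (theta_represents (-1) t t h3)
  set RL := (thetaRep ε k (t - k) h1).mul (thetaRep (-ε) k (t - k) h1) with hRLdef
  set RR := (thetaRep (-1) (2 * k) (2 * t - 2 * k) h2).mul (thetaRep (-1) t t h3) with hRRdef
  have hmemL : ∀ (N : ℤ) (q : ℤ × ℤ), q ∈ RL.fib N ↔
      (t * QL q.1 + k * q.1) + (t * QL q.2 + k * q.2) = N := by
    intro N q
    rw [Rep.mem_fib]
    show eTh k (t - k) q.1 + eTh k (t - k) q.2 = N ↔ _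
    rw [eTh_kt, eTh_kt]
  have hmemR : ∀ (N : ℤ) (q : ℤ × ℤ), q ∈ RR.fib N ↔
      (2 * t * QL q.1 + 2 * k * q.1) + t * q.2 ^ 2 = N := by
    intro N q
    rw [Rep.mem_fib]
    show eTh (2 * k) (2 * t - 2 * k) q.1 + eTh t t q.2 = N ↔ _
    rw [eTh_2k, eTh_tt]
  have hsL : ∀ q : ℤ × ℤ, RL.s q = (ε : ℚ) ^ q.1 * (-(ε : ℚ)) ^ q.2 := by
    intro q
    show ((ε : ℤ) : ℚ) ^ q.1 * ((-ε : ℤ) : ℚ) ^ q.2 = _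
    rw [hεn]
  have hsR : ∀ q : ℤ × ℤ, RR.s q = (-1 : ℚ) ^ q.1 * (-1 : ℚ) ^ q.2 := by
    intro q
    show ((-1 : ℤ) : ℚ) ^ q.1 * ((-1 : ℤ) : ℚ) ^ q.2 = _
    norm_num
  ext N
  rw [hLrep N, hRrep N]
  rw [← Finset.sum_filter_add_sum_filter_not (RL.fib N) (fun q : ℤ × ℤ => Even (q.1 + q.2))]
  have hodd : ∑ q ∈ (RL.fib N).filter (fun q : ℤ × ℤ => ¬ Even (q.1 + q.2)), RL.s q = 0 := by
    apply Finset.sum_involution (fun q _ => Prod.swap q)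
    · intro q hq
      rw [Finset.mem_filter] at hq
      have hxy : Odd (q.1 + q.2) := Int.not_even_iff_odd.1 hq.2
      rw [hsL q, hsL q.swap]
      show (ε : ℚ) ^ q.1 * (-(ε : ℚ)) ^ q.2 + (ε : ℚ) ^ q.2 * (-(ε : ℚ)) ^ q.1 = 0
      have hm1 : ∀ z : ℤ, (-(ε : ℚ)) ^ z = (-1 : ℚ) ^ z * (ε : ℚ) ^ z := by
        intro z
        rw [show -(ε : ℚ) = (-1) * (ε : ℚ) by ring, mul_zpow]
      rw [hm1, hm1]
      have hsum : (-1 : ℚ) ^ q.2 + (-1 : ℚ) ^ q.1 = 0 :=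
        neg_one_sum_zero (by rw [add_comm]; exact hxy)
      linear_combination ((ε : ℚ) ^ q.1 * (ε : ℚ) ^ q.2) * hsum
    · intro q hq _
      rw [Finset.mem_filter] at hq
      intro hswap
      apply hq.2
      have : q.2 = q.1 := congrArg Prod.fst hswap
      exact ⟨q.1, by omega⟩
    · intro q hq
      rw [Finset.mem_filter] at hq ⊢
      obtain ⟨hfib, hpar⟩ := hq
      rw [hmemL] at hfib
      constructor
      · rw [hmemL]
        show t * QL q.2 + k * q.2 + (t * QL q.1 + k * q.1) = N
        linarith
      · show ¬ Even (q.2 + q.1)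
        rwa [add_comm]
    · intro q _
      simp
  rw [hodd, add_zero]
  refine Finset.sum_nbij' (i := fun q : ℤ × ℤ => ((q.1 + q.2) / 2, (q.1 - q.2) / 2))
    (j := fun pv : ℤ × ℤ => (pv.1 + pv.2, pv.1 - pv.2)) ?_ ?_ ?_ ?_ ?_
  · intro q hq
    rw [Finset.mem_filter] at hq
    obtain ⟨hfib, hpar⟩ := hq
    rw [hmemL] at hfib
    obtain ⟨c, hc⟩ := hpar
    set p := (q.1 + q.2) / 2 with hp
    set v := (q.1 - q.2) / 2 with hv
    have hx : q.1 = p + v := by omega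
    have hy : q.2 = p - v := by omega
    rw [hmemR]
    show 2 * t * QL p + 2 * k * p + t * v ^ 2 = N
    have hpair := QL_pair p v
    rw [hx, hy] at hfib
    linear_combination hfib - t * hpair
  · intro pv hpv
    rw [hmemR] at hpv
    rw [Finset.mem_filter]
    constructor
    · rw [hmemL]
      show t * QL (pv.1 + pv.2) + k * (pv.1 + pv.2) + (t * QL (pv.1 - pv.2) + k * (pv.1 - pv.2)) = N
      have hpair := QL_pair pv.1 pv.2
      linear_combination t * hpair + hpv
    · show Even (pv.1 + pv.2 + (pv.1 - pv.2))
      exact ⟨pv.1, by ring⟩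
  · intro q hq
    rw [Finset.mem_filter] at hq
    obtain ⟨c, hc⟩ := hq.2
    have : (q.1 + q.2) / 2 + (q.1 - q.2) / 2 = q.1 ∧ (q.1 + q.2) / 2 - (q.1 - q.2) / 2 = q.2 := by
      constructor <;> omega
    exact Prod.ext this.1 this.2
  · intro pv _
    have h1 : (pv.1 + pv.2 + (pv.1 - pv.2)) / 2 = pv.1 := by omega
    have h2 : (pv.1 + pv.2 - (pv.1 - pv.2)) / 2 = pv.2 := by omega
    exact Prod.ext h1 h2
  · intro q hq
    rw [Finset.mem_filter] at hq
    obtain ⟨c, hc⟩ := hq.2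
    set p := (q.1 + q.2) / 2 with hp
    set v := (q.1 - q.2) / 2 with hv
    have hx : q.1 = p + v := by omega
    have hy : q.2 = p - v := by omega
    rw [hsL q, hsR]
    show (ε : ℚ) ^ q.1 * (-(ε : ℚ)) ^ q.2 = (-1 : ℚ) ^ p * (-1 : ℚ) ^ v
    rw [hx, hy]
    rw [show -(ε : ℚ) = (-1) * (ε : ℚ) by ring, mul_zpow]
    have he : (ε : ℚ) ^ (p + v) * (ε : ℚ) ^ (p - v) = 1 := by
      rw [← pm_zpow_add hε]
      exact pm_zpow_even hε ⟨p, by ring⟩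
    rw [pm_zpow_sub (Or.inr rfl) p v]
    linear_combination ((-1 : ℚ) ^ p * (-1 : ℚ) ^ v) * he


/-! ### Identity P2 : `f(-q^{2k},-q^{2t-2k}) f(-q^{t-2k},-q^{t+2k}) = f(q^t,q^{3t}) f(-q^{2k},-q^{t-2k})` -/

lemma QL_double (d : ℤ) : QL (2 * d) = d * (2 * d - 1) := by
  have h1 := QL_eq (2 * d)
  have h2 : (2 * d) * (2 * d - 1) = 2 * (d * (2 * d - 1)) := by ring
  omega

lemma QL_double_odd (d : ℤ) : QL (2 * d + 1) = d * (2 * d + 1) := by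
  have h1 := QL_eq (2 * d + 1)
  have h2 : (2 * d + 1) * (2 * d + 1 - 1) = 2 * (d * (2 * d + 1)) := by ring
  omega

lemma P2_arith_even (t k z d : ℤ) :
    2 * t * QL (z + 2 * d) + 2 * k * (z + 2 * d) + (2 * t * QL z + (t - 2 * k) * z)
      = 4 * t * QL (z + d) + t * (z + d) + (t * QL (2 * d) + 2 * k * (2 * d)) := by
  have h1 := QL_eq (z + 2 * d)
  have h2 := QL_eq z
  have h3 := QL_eq (z + d)
  have h4 := QL_double d
  linear_combination t * h1 + t * h2 - 2 * t * h3 - t * h4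

lemma P2_arith_odd (t k z d : ℤ) :
    2 * t * QL (z + (2 * d + 1)) + 2 * k * (z + (2 * d + 1)) + (2 * t * QL z + (t - 2 * k) * z)
      = 4 * t * QL (-d - z) + t * (-d - z) + (t * QL (2 * d + 1) + 2 * k * (2 * d + 1)) := by
  have h1 := QL_eq (z + (2 * d + 1))
  have h2 := QL_eq z
  have h3 := QL_eq (-d - z)
  have h4 := QL_double_odd d
  linear_combination t * h1 + t * h2 - 2 * t * h3 - t * h4

lemma identity_P2 (k t : ℤ) (ht : 0 < t) :
    theta (-1) (2 * k) (2 * t - 2 * k) * theta (-1) (t - 2 * k) (t + 2 * k)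
      = theta 1 t (3 * t) * theta (-1) (2 * k) (t - 2 * k) := by
  have h1 : 0 < 2 * k + (2 * t - 2 * k) := by omega
  have h2 : 0 < (t - 2 * k) + (t + 2 * k) := by omega
  have h3 : 0 < t + 3 * t := by omega
  have h4 : 0 < 2 * k + (t - 2 * k) := by omega
  have hLrep := Rep.Represents.mul (theta_represents (-1) (2 * k) (2 * t - 2 * k) h1)
    (theta_represents (-1) (t - 2 * k) (t + 2 * k) h2)
  have hRrep := Rep.Represents.mul (theta_represents 1 t (3 * t) h3)
    (theta_represents (-1) (2 * k) (t - 2 * k) h4)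
  set RL := (thetaRep (-1) (2 * k) (2 * t - 2 * k) h1).mul (thetaRep (-1) (t - 2 * k) (t + 2 * k) h2)
  set RR := (thetaRep 1 t (3 * t) h3).mul (thetaRep (-1) (2 * k) (t - 2 * k) h4)
  have hmemL : ∀ (N : ℤ) (q : ℤ × ℤ), q ∈ RL.fib N ↔
      (2 * t * QL q.1 + 2 * k * q.1) + (2 * t * QL q.2 + (t - 2 * k) * q.2) = N := by
    intro N q
    rw [Rep.mem_fib]
    show eTh (2 * k) (2 * t - 2 * k) q.1 + eTh (t - 2 * k) (t + 2 * k) q.2 = N ↔ _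
    rw [eTh_2k, eTh_D]
  have hmemR : ∀ (N : ℤ) (q : ℤ × ℤ), q ∈ RR.fib N ↔
      (4 * t * QL q.1 + t * q.1) + (t * QL q.2 + 2 * k * q.2) = N := by
    intro N q
    rw [Rep.mem_fib]
    show eTh t (3 * t) q.1 + eTh (2 * k) (t - 2 * k) q.2 = N ↔ _
    rw [eTh_t3t, eTh_B]
  have hsL : ∀ q : ℤ × ℤ, RL.s q = (-1 : ℚ) ^ (q.1 - q.2) := by
    intro q
    show ((-1 : ℤ) : ℚ) ^ q.1 * ((-1 : ℤ) : ℚ) ^ q.2 = _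
    rw [pm_zpow_sub (Or.inr rfl)]
    norm_num
  have hsR : ∀ q : ℤ × ℤ, RR.s q = (-1 : ℚ) ^ q.2 := by
    intro q
    show ((1 : ℤ) : ℚ) ^ q.1 * ((-1 : ℤ) : ℚ) ^ q.2 = _
    norm_num
  ext N
  rw [hLrep N, hRrep N]
  rw [← Finset.sum_filter_add_sum_filter_not (RL.fib N) (fun q : ℤ × ℤ => Even (q.1 - q.2)),
      ← Finset.sum_filter_add_sum_filter_not (RR.fib N) (fun q : ℤ × ℤ => Even q.2)]
  congr 1
  · -- even part : q.1 - q.2 = 2d ; maps (p,z) ↦ (z+d, 2d) and (a,b) ↦ (b + (a - b/2), a - b/2)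
    refine Finset.sum_nbij' (i := fun q : ℤ × ℤ => (q.2 + (q.1 - q.2) / 2, q.1 - q.2))
      (j := fun q : ℤ × ℤ => (q.2 + (q.1 - q.2 / 2), q.1 - q.2 / 2)) ?_ ?_ ?_ ?_ ?_
    · rintro ⟨x, y⟩ hq
      rw [Finset.mem_filter] at hq ⊢
      obtain ⟨hfib, hpar⟩ := hq
      obtain ⟨d, hd⟩ := hpar
      simp only at hfib hd ⊢
      obtain rfl : x = y + 2 * d := by omega
      rw [hmemL] at hfib
      simp only at hfib
      have hdiv : (y + 2 * d - y) / 2 = d := by omega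
      rw [hdiv]
      refine ⟨?_, ⟨d, by ring⟩⟩
      rw [hmemR]
      simp only
      rw [show y + 2 * d - y = 2 * d by ring]
      linear_combination hfib - P2_arith_even t k y d
    · rintro ⟨a, b⟩ hq
      rw [Finset.mem_filter] at hq ⊢
      obtain ⟨hfib, hpar⟩ := hq
      obtain ⟨d, hd⟩ := hpar
      simp only at hfib hd ⊢
      obtain rfl : b = 2 * d := by omega
      rw [hmemR] at hfib
      simp only at hfib
      have hdiv : 2 * d / 2 = d := by omega
      rw [hdiv]
      refine ⟨?_, ⟨d, by ring⟩⟩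
      rw [hmemL]
      simp only
      have harith := P2_arith_even t k (a - d) d
      rw [show a - d + 2 * d = 2 * d + (a - d) by ring] at harith
      rw [show a - d + d = a by ring] at harith
      linear_combination hfib + harith
    · rintro ⟨x, y⟩ hq
      rw [Finset.mem_filter] at hq
      obtain ⟨d, hd⟩ := hq.2
      simp only at hd ⊢
      have : y + (x - y) / 2 - (x - y) / 2 = y := by ring
      refine Prod.ext ?_ ?_ <;> simp only <;> omega
    · rintro ⟨a, b⟩ hq
      rw [Finset.mem_filter] at hq
      obtain ⟨d, hd⟩ := hq.2
      simp only at hd ⊢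
      refine Prod.ext ?_ ?_ <;> simp only <;> omega
    · rintro ⟨x, y⟩ hq
      rw [hsL ⟨x, y⟩, hsR]
  · -- odd part : q.1 - q.2 = 2d+1 ; maps (p,z) ↦ ((1-n)/2 - z, n) with n = p - z
    refine Finset.sum_nbij' (i := fun q : ℤ × ℤ => ((1 - (q.1 - q.2)) / 2 - q.2, q.1 - q.2))
      (j := fun q : ℤ × ℤ => (q.2 + ((1 - q.2) / 2 - q.1), (1 - q.2) / 2 - q.1) ) ?_ ?_ ?_ ?_ ?_
    · rintro ⟨x, y⟩ hq
      rw [Finset.mem_filter] at hq ⊢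
      obtain ⟨hfib, hpar⟩ := hq
      rw [Int.not_even_iff_odd] at hpar
      obtain ⟨d, hd⟩ := hpar
      simp only at hfib hd ⊢
      obtain rfl : x = y + (2 * d + 1) := by omega
      rw [hmemL] at hfib
      simp only at hfib
      have hdiv : (1 - (y + (2 * d + 1) - y)) / 2 - y = -d - y := by omega
      rw [hdiv]
      constructor
      · rw [hmemR]
        simp only
        rw [show y + (2 * d + 1) - y = 2 * d + 1 by ring]
        linear_combination hfib - P2_arith_odd t k y d
      · rw [Int.not_even_iff_odd]
        exact ⟨d, by omega⟩
    · rintro ⟨a, b⟩ hq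
      rw [Finset.mem_filter] at hq ⊢
      obtain ⟨hfib, hpar⟩ := hq
      rw [Int.not_even_iff_odd] at hpar
      obtain ⟨d, hd⟩ := hpar
      simp only at hfib hd ⊢
      obtain rfl : b = 2 * d + 1 := by omega
      rw [hmemR] at hfib
      simp only at hfib
      have hdiv : (1 - (2 * d + 1)) / 2 - a = -d - a := by omega
      rw [hdiv]
      constructor
      · rw [hmemL]
        simp only
        have harith := P2_arith_odd t k (-d - a) d
        rw [show -d - a + (2 * d + 1) = 2 * d + 1 + (-d - a) by ring] at harith
        rw [show -d - (-d - a) = a by ring] at harith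
        linear_combination harith + hfib
      · rw [Int.not_even_iff_odd]
        exact ⟨d, by omega⟩
    · rintro ⟨x, y⟩ hq
      rw [Finset.mem_filter] at hq
      rw [Int.not_even_iff_odd] at hq
      obtain ⟨d, hd⟩ := hq.2
      simp only at hd ⊢
      refine Prod.ext ?_ ?_ <;> simp only <;> omega
    · rintro ⟨a, b⟩ hq
      rw [Finset.mem_filter] at hq
      rw [Int.not_even_iff_odd] at hq
      obtain ⟨d, hd⟩ := hq.2
      simp only at hd ⊢
      refine Prod.ext ?_ ?_ <;> simp only <;> omega
    · rintro ⟨x, y⟩ hq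
      rw [hsL ⟨x, y⟩, hsR]


/-! ### Nonvanishing and supportedness -/

lemma theta_C_ne_zero (ε k t M : ℤ) (ht : 0 < t) (hMt : M ∣ t) (hM3 : 3 ≤ M)
    (hk : IsCoprime M k) : theta ε k (t - k) ≠ 0 := by
  have h1 : 0 < k + (t - k) := by omega
  have hrep := theta_represents ε k (t - k) h1
  have key : ∀ x : ℤ, eTh k (t - k) x = 0 → x = 0 := by
    intro x hx
    rw [eTh_kt] at hx
    obtain ⟨u, hu⟩ := hMt
    have hdvd : M ∣ k * x := ⟨-(u * QL x), by rw [hu] at hx; linarith [hx]⟩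
    have hMx : M ∣ x := hk.dvd_of_dvd_mul_left hdvd
    obtain ⟨y, rfl⟩ := hMx
    by_contra hx0
    have hy0 : y ≠ 0 := by
      intro h
      exact hx0 (by rw [h, mul_zero])
    have hQL := QL_eq (M * y)
    -- t * QL (M y) + k * M y = 0 with t = M u
    have h2 : M * (u * (2 * QL (M * y)) + 2 * (k * y)) = 0 := by
      rw [hu] at hx
      ring_nf
      ring_nf at hx
      nlinarith [hx]
    have hM0 : M ≠ 0 := by omega
    have h3 : u * (2 * QL (M * y)) + 2 * (k * y) = 0 := by
      rcases mul_eq_zero.1 h2 with h | h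
      · exact absurd h hM0
      · exact h
    rw [hQL] at h3
    -- u * (M y (M y - 1)) + 2 k y = 0  ⇒  y * (u * M * (M y - 1) + 2 k) = 0
    have h4 : y * (u * (M * (M * y - 1)) + 2 * k) = 0 := by linarith [h3]; 
    have h5 : u * (M * (M * y - 1)) + 2 * k = 0 := by
      rcases mul_eq_zero.1 h4 with h | h
      · exact absurd h hy0
      · exact h
    have h6 : M ∣ 2 * k := ⟨-(u * (M * y - 1)), by linarith [h5]⟩
    have h7 : M ∣ 2 := hk.dvd_of_dvd_mul_right h6
    have h8 : M ≤ 2 := Int.le_of_dvd (by norm_num) h7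
    omega
  intro h0
  have hc := hrep 0
  rw [h0] at hc
  have hfib : (thetaRep ε k (t - k) h1).fib 0 = {0} := by
    ext x
    rw [Rep.mem_fib, Finset.mem_singleton]
    constructor
    · exact key x
    · rintro rfl
      show eTh k (t - k) 0 = 0
      rw [eTh_kt]
      show t * QL 0 + k * 0 = 0
      have : QL 0 = 0 := rfl
      rw [this]
      ring
  rw [hfib, Finset.sum_singleton] at hc
  have : (thetaRep ε k (t - k) h1).s 0 = 1 := by
    show ((ε : ℤ) : ℚ) ^ (0 : ℤ) = 1
    rw [zpow_zero]
  rw [this] at hc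
  simp at hc

lemma theta_w_ne_zero (t : ℤ) (ht : 0 < t) : theta 1 t (3 * t) ≠ 0 := by
  have h1 : 0 < t + 3 * t := by omega
  have hrep := theta_represents 1 t (3 * t) h1
  intro h0
  have hc := hrep 0
  rw [h0] at hc
  have hfib : (thetaRep 1 t (3 * t) h1).fib 0 = {0} := by
    ext j
    rw [Rep.mem_fib, Finset.mem_singleton]
    constructor
    · intro hj
      have hj2 : eTh t (3 * t) j = 0 := hj
      have hd := eTh_doubled t (3 * t) j
      rw [hj2] at hd
      have h2 : 2 * t * (j * (2 * j - 1)) = 0 := by linarith [hd]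
      rcases mul_eq_zero.1 h2 with h | h
      · omega
      · rcases mul_eq_zero.1 h with h' | h' <;> omega
    · rintro rfl
      show eTh t (3 * t) 0 = 0
      rw [eTh_t3t]
      show 4 * t * QL 0 + t * 0 = 0
      have : QL 0 = 0 := rfl
      rw [this]
      ring
  rw [hfib, Finset.sum_singleton] at hc
  have : (thetaRep 1 t (3 * t) h1).s 0 = 1 := by
    show ((1 : ℤ) : ℚ) ^ (0 : ℤ) = 1
    rw [zpow_zero]
  rw [this] at hc
  simp at hc

lemma theta_phi_ne_zero (t : ℤ) (ht : 0 < t) : theta (-1) t t ≠ 0 := by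
  have h1 : 0 < t + t := by omega
  have hrep := theta_represents (-1) t t h1
  intro h0
  have hc := hrep 0
  rw [h0] at hc
  have hfib : (thetaRep (-1) t t h1).fib 0 = {0} := by
    ext v
    rw [Rep.mem_fib, Finset.mem_singleton]
    constructor
    · intro hv
      have hv2 : eTh t t v = 0 := hv
      rw [eTh_tt] at hv2
      rcases mul_eq_zero.1 hv2 with h | h
      · omega
      · exact pow_eq_zero_iff (by norm_num) |>.1 h
    · rintro rfl
      show eTh t t 0 = 0
      rw [eTh_tt]
      ring
  rw [hfib, Finset.sum_singleton] at hc
  have : (thetaRep (-1) t t h1).s 0 = 1 := by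
    show ((-1 : ℤ) : ℚ) ^ (0 : ℤ) = 1
    rw [zpow_zero]
  rw [this] at hc
  simp at hc

lemma supported_w (M t : ℤ) (ht : 0 < t) (hMt : M ∣ t) : Supported M (theta 1 t (3 * t)) := by
  have h1 : 0 < t + 3 * t := by omega
  intro N hN
  rw [theta_represents 1 t (3 * t) h1 N]
  apply Finset.sum_eq_zero
  intro j hj
  exfalso
  rw [Rep.mem_fib] at hj
  have hj2 : eTh t (3 * t) j = N := hj
  apply hN
  rw [← hj2, eTh_t3t]
  exact dvd_add (Dvd.dvd.mul_right (hMt.mul_left 4) _) (Dvd.dvd.mul_right hMt j)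

lemma supported_phi (M t : ℤ) (ht : 0 < t) (hMt : M ∣ t) : Supported M (theta (-1) t t) := by
  have h1 : 0 < t + t := by omega
  intro N hN
  rw [theta_represents (-1) t t h1 N]
  apply Finset.sum_eq_zero
  intro v hv
  exfalso
  rw [Rep.mem_fib] at hv
  have hv2 : eTh t t v = N := hv
  apply hN
  rw [← hv2, eTh_tt]
  exact Dvd.dvd.mul_right hMt _


/-! ### The involution -/

abbrev Omeg (a b : ℕ) : Type := (Fin 0 → ℤ) × ((Fin a → ℤ) × (Fin b → ℤ × ℤ))

def involL {a b : ℕ} (v : Omeg a b) : ℤ :=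
  (∑ i, v.2.1 i) + (∑ j, (v.2.2 j).1) - 2 * ∑ j, (v.2.2 j).2

def involAlpha (c M : ℤ) {a b : ℕ} (v : Omeg a b) : ℤ := 2 + 2 * ((involL v - c) / M)

def invol (c M : ℤ) {a b : ℕ} (v : Omeg a b) : Omeg a b :=
  (v.1, (fun i => involAlpha c M v - v.2.1 i,
         fun j => (involAlpha c M v - (v.2.2 j).1, 1 - involAlpha c M v - (v.2.2 j).2)))

lemma QL_alpha (w : ℤ) : QL (2 + 2 * w) = (1 + w) * (1 + 2 * w) := by
  have h1 := QL_eq (2 + 2 * w)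
  have h2 : (2 + 2 * w) * (2 + 2 * w - 1) = 2 * ((1 + w) * (1 + 2 * w)) := by ring
  omega

lemma QL_one_sub_alpha (w : ℤ) : QL (1 - (2 + 2 * w)) = (1 + w) * (1 + 2 * w) := by
  have h1 := QL_eq (1 - (2 + 2 * w))
  have h2 : (1 - (2 + 2 * w)) * (1 - (2 + 2 * w) - 1) = 2 * ((1 + w) * (1 + 2 * w)) := by ring
  omega

lemma sum_shift_A (p : ℕ) (t k α : ℤ) (f : Fin p → ℤ) :
    ∑ i, eTh k (t - k) (α - f i)
      = (∑ i, eTh k (t - k) (f i)) + (t * (1 - α) - 2 * k) * (∑ i, f i)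
        + (p : ℤ) * (t * QL α + k * α) := by
  have hterm : ∀ x : ℤ, eTh k (t - k) (α - x)
      = eTh k (t - k) x + (t * (1 - α) - 2 * k) * x + (t * QL α + k * α) := by
    intro x
    rw [eTh_kt, eTh_kt, QL_shift α x]
    ring
  simp only [hterm]
  rw [Finset.sum_add_distrib, Finset.sum_add_distrib, ← Finset.mul_sum, Finset.sum_const,
    Finset.card_univ, Fintype.card_fin, nsmul_eq_mul]

lemma sum_shift_D (p : ℕ) (t k α : ℤ) (f : Fin p → ℤ) :
    ∑ j, eTh (t - 2 * k) (t + 2 * k) (1 - α - f j)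
      = (∑ j, eTh (t - 2 * k) (t + 2 * k) (f j)) + (2 * t * α - 2 * (t - 2 * k)) * (∑ j, f j)
        + (p : ℤ) * (2 * t * QL (1 - α) + (t - 2 * k) * (1 - α)) := by
  have hterm : ∀ x : ℤ, eTh (t - 2 * k) (t + 2 * k) (1 - α - x)
      = eTh (t - 2 * k) (t + 2 * k) x + (2 * t * α - 2 * (t - 2 * k)) * x
        + (2 * t * QL (1 - α) + (t - 2 * k) * (1 - α)) := by
    intro x
    rw [eTh_D, eTh_D, show (1 : ℤ) - α - x = (1 - α) - x by ring, QL_shift (1 - α) x]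
    ring
  simp only [hterm]
  rw [Finset.sum_add_distrib, Finset.sum_add_distrib, ← Finset.mul_sum, Finset.sum_const,
    Finset.card_univ, Fintype.card_fin, nsmul_eq_mul]

lemma involL_formula {a b : ℕ} (c M : ℤ) (v : Omeg a b) :
    involL (invol c M v) = ((a : ℤ) + 3 * (b : ℤ)) * involAlpha c M v - 2 * (b : ℤ) - involL v := by
  obtain ⟨u, n, rz⟩ := v
  show (∑ i, (involAlpha c M (u, n, rz) - n i))
      + (∑ j, (involAlpha c M (u, n, rz) - (rz j).1))
      - 2 * ∑ j, (1 - involAlpha c M (u, n, rz) - (rz j).2) = _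
  rw [Finset.sum_sub_distrib, Finset.sum_sub_distrib,
    show (fun j => 1 - involAlpha c M (u, n, rz) - (rz j).2)
      = fun j => (1 - involAlpha c M (u, n, rz)) - (rz j).2 from rfl,
    Finset.sum_sub_distrib, Finset.sum_const, Finset.sum_const, Finset.sum_const]
  simp only [Finset.card_univ, Fintype.card_fin, nsmul_eq_mul]
  show _ = _ - 2 * (b : ℤ) - ((∑ i, n i) + (∑ j, (rz j).1) - 2 * ∑ j, (rz j).2)
  ring

def bigE (k t σ : ℤ) {a b : ℕ} (v : Omeg a b) : ℤ :=
  σ + ((∑ i, eTh k (t - k) (v.2.1 i))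
    + ∑ j, (eTh k (t - k) ((v.2.2 j).1) + eTh (t - 2 * k) (t + 2 * k) ((v.2.2 j).2)))

def bigS (ek el : ℚ) {a b : ℕ} (v : Omeg a b) : ℚ :=
  (∏ i, ek ^ (v.2.1 i)) * ∏ j, (el ^ ((v.2.2 j).1) * (-1 : ℚ) ^ ((v.2.2 j).2))

lemma involAlpha_eq {a b : ℕ} (c M : ℤ) (hM0 : M ≠ 0) (v : Omeg a b) {w : ℤ}
    (hw : involL v - c = M * w) : involAlpha c M v = 2 + 2 * w := by
  unfold involAlpha
  rw [hw, Int.mul_ediv_cancel_left _ hM0]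

lemma invol_bigE {a b : ℕ} (k t σ c M ℓ m : ℤ) (ha : (a : ℤ) = 2 * ℓ) (hb : (b : ℤ) = 2 * m + 1)
    (hM : M = 2 * ℓ + 6 * m + 3) (hc : c = 2 * ℓ + 4 * m + 2) (hM0 : M ≠ 0)
    (v : Omeg a b) (hdvd : M ∣ involL v - c) :
    bigE k t σ (invol c M v) = bigE k t σ v := by
  obtain ⟨w, hw⟩ := hdvd
  have hα := involAlpha_eq c M hM0 v hw
  obtain ⟨u, n, rz⟩ := v
  have hinvol : invol c M (u, n, rz) = (u, (fun i => (2 + 2 * w) - n i,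
      fun j => ((2 + 2 * w) - (rz j).1, 1 - (2 + 2 * w) - (rz j).2))) := by
    unfold invol
    rw [hα]
  rw [hinvol]
  have hL : (∑ i, n i) + (∑ j, (rz j).1) - 2 * ∑ j, (rz j).2 - c = M * w := hw
  show σ + ((∑ i, eTh k (t - k) ((2 + 2 * w) - n i))
      + ∑ j, (eTh k (t - k) ((2 + 2 * w) - (rz j).1)
        + eTh (t - 2 * k) (t + 2 * k) (1 - (2 + 2 * w) - (rz j).2)))
    = σ + ((∑ i, eTh k (t - k) (n i))
      + ∑ j, (eTh k (t - k) ((rz j).1) + eTh (t - 2 * k) (t + 2 * k) ((rz j).2)))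
  rw [Finset.sum_add_distrib, Finset.sum_add_distrib (f := fun j => eTh k (t - k) ((rz j).1))]
  rw [sum_shift_A a t k (2 + 2 * w) n, sum_shift_A b t k (2 + 2 * w) (fun j => (rz j).1),
    sum_shift_D b t k (2 + 2 * w) (fun j => (rz j).2)]
  rw [QL_alpha w, QL_one_sub_alpha w, ha, hb]
  subst hM hc
  linear_combination (t * (1 - (2 + 2 * w)) - 2 * k) * hL

lemma invol_bigS {a b : ℕ} (ek el : ℚ) (hek : ek = 1 ∨ ek = -1) (hel : el = 1 ∨ el = -1)
    (hbodd : Odd b) (c M : ℤ) (hM0 : M ≠ 0) (v : Omeg a b) {w : ℤ}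
    (hw : involL v - c = M * w) :
    bigS ek el (invol c M v) = - bigS ek el v := by
  have hα := involAlpha_eq c M hM0 v hw
  obtain ⟨u, n, rz⟩ := v
  have hinvol : invol c M (u, n, rz) = (u, (fun i => (2 + 2 * w) - n i,
      fun j => ((2 + 2 * w) - (rz j).1, 1 - (2 + 2 * w) - (rz j).2))) := by
    unfold invol
    rw [hα]
  rw [hinvol]
  show (∏ i, ek ^ ((2 + 2 * w) - n i))
      * ∏ j, (el ^ ((2 + 2 * w) - (rz j).1) * (-1 : ℚ) ^ (1 - (2 + 2 * w) - (rz j).2))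
    = - ((∏ i, ek ^ (n i)) * ∏ j, (el ^ ((rz j).1) * (-1 : ℚ) ^ ((rz j).2)))
  have h1 : ∀ x : ℤ, ek ^ (2 + 2 * w - x) = ek ^ x := by
    intro x
    rw [pm_zpow_sub hek, pm_zpow_even hek ⟨1 + w, by ring⟩, one_mul]
  have h2 : ∀ x : ℤ, el ^ (2 + 2 * w - x) = el ^ x := by
    intro x
    rw [pm_zpow_sub hel, pm_zpow_even hel ⟨1 + w, by ring⟩, one_mul]
  have h3 : ∀ x : ℤ, (-1 : ℚ) ^ (1 - (2 + 2 * w) - x) = -((-1 : ℚ) ^ x) := by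
    intro x
    rw [show 1 - (2 + 2 * w) - x = (1 - (2 + 2 * w)) - x by ring, pm_zpow_sub (Or.inr rfl),
      neg_one_zpow_odd ⟨-1 - w, by ring⟩]
    ring
  simp only [h1, h2, h3]
  have h4 : ∀ j, el ^ ((rz j).1) * -((-1 : ℚ) ^ ((rz j).2))
      = (-1) * (el ^ ((rz j).1) * (-1 : ℚ) ^ ((rz j).2)) := fun j => by ring
  simp only [h4]
  rw [Finset.prod_mul_distrib, Finset.prod_const, Finset.card_univ, Fintype.card_fin,
    Odd.neg_one_pow hbodd]
  ring

lemma invol_invol {a b : ℕ} (c M ℓ m : ℤ) (ha : (a : ℤ) = 2 * ℓ) (hb : (b : ℤ) = 2 * m + 1)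
    (hM : M = 2 * ℓ + 6 * m + 3) (hc : c = 2 * ℓ + 4 * m + 2) (hM0 : M ≠ 0)
    (v : Omeg a b) (hdvd : M ∣ involL v - c) :
    invol c M (invol c M v) = v := by
  obtain ⟨w, hw⟩ := hdvd
  have hα := involAlpha_eq c M hM0 v hw
  have hL2 : involL (invol c M v) = involL v := by
    rw [involL_formula, hα, ha, hb]
    have hLv : involL v = c + M * w := by linarith [hw]
    rw [hLv, hM, hc]
    ring
  have hw2 : involL (invol c M v) - c = M * w := by rw [hL2]; exact hw
  have hα2 := involAlpha_eq c M hM0 (invol c M v) hw2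
  obtain ⟨u, n, rz⟩ := v
  have hinvol : invol c M (u, n, rz) = (u, (fun i => (2 + 2 * w) - n i,
      fun j => ((2 + 2 * w) - (rz j).1, 1 - (2 + 2 * w) - (rz j).2))) := by
    unfold invol
    rw [hα]
  rw [hinvol] at hα2 ⊢
  have hinvol2 : invol c M ((u, (fun i => (2 + 2 * w) - n i,
      fun j => ((2 + 2 * w) - (rz j).1, 1 - (2 + 2 * w) - (rz j).2))) : Omeg a b)
      = (u, (fun i => (2 + 2 * w) - ((2 + 2 * w) - n i),
        fun j => ((2 + 2 * w) - ((2 + 2 * w) - (rz j).1),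
          1 - (2 + 2 * w) - (1 - (2 + 2 * w) - (rz j).2)))) := by
    unfold invol
    rw [hα2]
  rw [hinvol2]
  refine Prod.ext rfl (Prod.ext ?_ ?_)
  · funext i
    show (2 + 2 * w) - ((2 + 2 * w) - n i) = n i
    ring
  · funext j
    show ((2 + 2 * w) - ((2 + 2 * w) - (rz j).1),
      1 - (2 + 2 * w) - (1 - (2 + 2 * w) - (rz j).2)) = rz j
    rw [show (2 + 2 * w) - ((2 + 2 * w) - (rz j).1) = (rz j).1 by ring,
      show 1 - (2 + 2 * w) - (1 - (2 + 2 * w) - (rz j).2) = (rz j).2 by ring]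


lemma bigE_decomp {a b : ℕ} (k t σ : ℤ) (v : Omeg a b) :
    bigE k t σ v = σ + t * ((∑ i, QL (v.2.1 i)) + (∑ j, QL ((v.2.2 j).1))
      + 2 * ∑ j, QL ((v.2.2 j).2) + ∑ j, (v.2.2 j).2) + k * involL v := by
  obtain ⟨u, n, rz⟩ := v
  unfold bigE involL
  simp only [eTh_kt, eTh_D, Finset.sum_add_distrib, ← Finset.mul_sum]
  ring

lemma main_vanishing (ℓ m k M t σ c : ℤ) (hℓ : 0 ≤ ℓ) (hm : 0 ≤ m)
    (hM : M = 2 * ℓ + 6 * m + 3) (hc : c = 2 * ℓ + 4 * m + 2) (hσ : σ = -c * k)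
    (ht : 0 < t) (hMt : M ∣ t) (hk : IsCoprime M k)
    (ek el : ℤ) (hek : (ek : ℚ) = 1 ∨ (ek : ℚ) = -1)
    (hel : (el : ℚ) = 1 ∨ (el : ℚ) = -1) :
    huff M (HahnSeries.single σ (1 : ℚ) *
      (theta ek k (t - k) ^ (2 * ℓ).toNat *
        (theta el k (t - k) * theta (-1) (t - 2 * k) (t + 2 * k)) ^ (2 * m + 1).toNat)) = 0 := by
  have hA : 0 < k + (t - k) := by omega
  have hD : 0 < (t - 2 * k) + (t + 2 * k) := by omega
  set a := (2 * ℓ).toNat with hadef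
  set b := (2 * m + 1).toNat with hbdef
  have ha : (a : ℤ) = 2 * ℓ := Int.toNat_of_nonneg (by omega)
  have hb : (b : ℤ) = 2 * m + 1 := Int.toNat_of_nonneg (by omega)
  have hM0 : M ≠ 0 := by omega
  have hbodd : Odd b := by
    rw [Nat.odd_iff]
    omega
  set RA := thetaRep ek k (t - k) hA with hRA
  set RCD := (thetaRep el k (t - k) hA).mul (thetaRep (-1) (t - 2 * k) (t + 2 * k) hD) with hRCD
  set RX := (Rep.singleRep σ ℤ).mul ((RA.pow a).mul (RCD.pow b)) with hRX
  have hrep : RX.Represents (HahnSeries.single σ (1 : ℚ) *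
      (theta ek k (t - k) ^ a
        * (theta el k (t - k) * theta (-1) (t - 2 * k) (t + 2 * k)) ^ b)) :=
    (Rep.represents_single σ ℤ).mul
      (((theta_represents ek k (t - k) hA).pow a).mul
        (((theta_represents el k (t - k) hA).mul
          (theta_represents (-1) (t - 2 * k) (t + 2 * k) hD)).pow b))
  have heRX : ∀ v : Omeg a b, RX.e v = bigE k t σ v := by
    intro v
    show (Rep.singleRep σ ℤ).e v.1 + ((RA.pow a).e v.2.1 + (RCD.pow b).e v.2.2) = _
    rw [Rep.pow_e, Rep.pow_e]
    rfl
  have hsRX : ∀ v : Omeg a b, RX.s v = bigS (ek : ℚ) (el : ℚ) v := by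
    intro v
    show (Rep.singleRep σ ℤ).s v.1 * ((RA.pow a).s v.2.1 * (RCD.pow b).s v.2.2) = _
    rw [Rep.pow_s, Rep.pow_s]
    show (1 : ℚ) * ((∏ i, ((ek : ℤ) : ℚ) ^ (v.2.1 i))
      * ∏ j, (((el : ℤ) : ℚ) ^ ((v.2.2 j).1) * (((-1 : ℤ) : ℚ)) ^ ((v.2.2 j).2))) = _
    rw [one_mul]
    simp only [Int.cast_neg, Int.cast_one]
    rfl
  have hdvd_of_mem : ∀ N, M ∣ N → ∀ v ∈ RX.fib N, M ∣ involL v - c := by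
    intro N hMN v hv
    rw [Rep.mem_fib, heRX, bigE_decomp] at hv
    set Wagg := (∑ i, QL (v.2.1 i)) + (∑ j, QL ((v.2.2 j).1))
      + 2 * ∑ j, QL ((v.2.2 j).2) + ∑ j, (v.2.2 j).2 with hWagg
    have heq : k * (involL v - c) = N - t * Wagg := by
      rw [hσ] at hv
      linear_combination hv
    have hdd : M ∣ N - t * Wagg := dvd_sub hMN (hMt.mul_right Wagg)
    rw [← heq] at hdd
    exact hk.dvd_of_dvd_mul_left hdd
  ext N
  rw [HahnSeries.coeff_zero, huff_coeff]
  by_cases hMN : M ∣ N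
  swap
  · rw [if_neg hMN]
  · rw [if_pos hMN, hrep N]
    apply Finset.sum_involution (fun v _ => invol c M v)
    · intro v hv
      obtain ⟨w, hw⟩ := hdvd_of_mem N hMN v hv
      rw [hsRX, hsRX, invol_bigS (ek : ℚ) (el : ℚ) hek hel hbodd c M hM0 v hw]
      ring
    · intro v hv hfne heq
      apply hfne
      obtain ⟨w, hw⟩ := hdvd_of_mem N hMN v hv
      have h2 : RX.s (invol c M v) = - RX.s v := by
        rw [hsRX, hsRX]
        exact invol_bigS (ek : ℚ) (el : ℚ) hek hel hbodd c M hM0 v hw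
      rw [heq] at h2
      linarith
    · intro v hv
      rw [Rep.mem_fib, heRX]
      rw [invol_bigE k t σ c M ℓ m ha hb hM hc hM0 v (hdvd_of_mem N hMN v hv)]
      rw [← heRX]
      exact Rep.mem_fib.1 hv
    · intro v hv
      exact invol_invol c M ℓ m ha hb hM hc hM0 v (hdvd_of_mem N hMN v hv)

/-- **Theorem (Type I, eq. (1.4))**: with `M = 2ℓ + 6m + 3` and
`σ = -(2ℓ + 4m + 2)k`, for `κ, λ ∈ {0,1}` and `gcd(k, M) = 1`,
`H_M(q^σ · f((-1)^κ q^k, (-1)^κ q^{μM-k})^{2ℓ} ·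
  (f(-q^{2k}, -q^{μM-2k}) / f((-1)^λ q^k, (-1)^λ q^{μM-k}))^{2m+1}) = 0`. -/
theorem statement0 (μ ℓ m k M σ : ℤ) (hμ : 1 ≤ μ) (hℓ : 0 ≤ ℓ) (hm : 0 ≤ m)
    (hM : M = 2 * ℓ + 6 * m + 3) (hσ : σ = -(2 * ℓ + 4 * m + 2) * k)
    (κ lam : ℕ) (hκ : κ = 0 ∨ κ = 1) (hlam : lam = 0 ∨ lam = 1)
    (hk : Int.gcd k M = 1) :
    huff M (HahnSeries.single σ (1 : ℚ)
      * theta ((-1) ^ κ) k (μ * M - k) ^ (2 * ℓ)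
      * (theta (-1) (2 * k) (μ * M - 2 * k)
          / theta ((-1) ^ lam) k (μ * M - k)) ^ (2 * m + 1)) = 0 := by
  set t := μ * M with htdef
  have hM3 : 3 ≤ M := by omega
  have ht : 0 < t := mul_pos (by omega) (by omega)
  have hMt : M ∣ t := ⟨μ, by ring⟩
  have hk' : IsCoprime (M : ℤ) k := by
    rw [Int.isCoprime_iff_gcd_eq_one, Int.gcd_comm]
    exact hk
  have hek : (((-1) ^ κ : ℤ) : ℚ) = 1 ∨ (((-1) ^ κ : ℤ) : ℚ) = -1 := by
    rcases hκ with rfl | rfl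
    · left; norm_num
    · right; norm_num
  have helC : (((-1) ^ lam : ℤ) : ℚ) = 1 ∨ (((-1) ^ lam : ℤ) : ℚ) = -1 := by
    rcases hlam with rfl | rfl
    · left; norm_num
    · right; norm_num
  have hel : ((-(-1) ^ lam : ℤ) : ℚ) = 1 ∨ ((-(-1) ^ lam : ℤ) : ℚ) = -1 := by
    rcases hlam with rfl | rfl
    · right; norm_num
    · left; norm_num
  set A := theta ((-1) ^ κ) k (t - k) with hA
  set B := theta (-1) (2 * k) (t - 2 * k) with hB
  set C := theta ((-1) ^ lam) k (t - k) with hC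
  set C' := theta (-(-1) ^ lam) k (t - k) with hC'
  set D := theta (-1) (t - 2 * k) (t + 2 * k) with hD
  set w' := theta 1 t (3 * t) with hw'
  set φ := theta (-1) t t with hφ
  have hCne : C ≠ 0 := theta_C_ne_zero _ k t M ht hMt hM3 hk'
  have hw'ne : w' ≠ 0 := theta_w_ne_zero t ht
  have hφne : φ ≠ 0 := theta_phi_ne_zero t ht
  have hwφne : w' * φ ≠ 0 := mul_ne_zero hw'ne hφne
  have h1 : C * C' = theta (-1) (2 * k) (2 * t - 2 * k) * φ :=
    identity_P1 ((-1) ^ lam) k t ht helC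
  have h2 : theta (-1) (2 * k) (2 * t - 2 * k) * D = w' * B :=
    identity_P2 k t ht
  have key : C * (C' * D) = B * (w' * φ) := by
    linear_combination D * h1 + φ * h2
  have hquot : B / C = (C' * D) / (w' * φ) := by
    rw [div_eq_div_iff hCne hwφne]
    linear_combination -key
  rw [hquot]
  have hp1 : ((2 * ℓ : ℤ)) = (((2 * ℓ).toNat : ℕ) : ℤ) := by omega
  have hp2 : ((2 * m + 1 : ℤ)) = (((2 * m + 1).toNat : ℕ) : ℤ) := by omega
  rw [hp1, hp2, zpow_natCast, zpow_natCast]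
  rw [div_pow, div_eq_mul_inv]
  have hrearr : HahnSeries.single σ (1 : ℚ) * A ^ (2 * ℓ).toNat
      * ((C' * D) ^ (2 * m + 1).toNat * ((w' * φ) ^ (2 * m + 1).toNat)⁻¹)
      = (HahnSeries.single σ (1 : ℚ) * (A ^ (2 * ℓ).toNat * (C' * D) ^ (2 * m + 1).toNat))
        * ((w' * φ) ^ (2 * m + 1).toNat)⁻¹ := by
    ring
  rw [hrearr]
  have hsupp : Supported M (((w' * φ) ^ (2 * m + 1).toNat)⁻¹) :=
    Supported.inv (Supported.pow ((supported_w M t ht hMt).mul (supported_phi M t ht hMt)) _)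
  rw [huff_mul_supported M _ _ hsupp]
  rw [main_vanishing ℓ m k M t σ (2 * ℓ + 4 * m + 2) hℓ hm hM rfl hσ ht hMt hk'
    ((-1) ^ κ) (-(-1) ^ lam) hek hel]
  rw [zero_mul]

end ThetaVanish
end
end

section
/- Let μ ≥ 1, ℓ ≥ 0, m ≥ 0 be integers, set M = 4ℓ + 2m + 3 and σ = −(3ℓ + m + 2)·k. Then for every pair (κ, λ) ∈ {(0,1), (1,0)} and every integer k with gcd(k, M) = 1, one has H_M( q^σ · f((−1)^κ q^k, (−1)^κ q^{μM−k})^{2ℓ+1} · f((−1)^λ q^{μM+k}, (−1)^λ q^{μM−k})^{2m+1} ) = 0. -/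
/-!
Common setup: Ramanujan theta series as formal Laurent series over `ℚ`
(`LaurentSeries ℚ = HahnSeries ℤ ℚ`), and the huffing operator `H_M`.
-/

noncomputable section

open scoped Classical

namespace ThetaVanish

section Engine
variable (P k M : ℤ) (e1 e2 : ℚ)


/-- `n(n-1)/2` as an integer. -/
def q2f (n : ℤ) : ℤ := n * (n - 1) / 2

lemma q2f_two (n : ℤ) : 2 * q2f n = n * (n - 1) := by
  obtain ⟨c, hc⟩ := Int.even_mul_pred_self n
  unfold q2f; omega

lemma q2f_nonneg (n : ℤ) : 0 ≤ q2f n := by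
  have h := q2f_two n
  have h2 : 0 ≤ n * (n - 1) := by nlinarith [sq_nonneg (2*n - 1)]
  omega

lemma q2f_reflect (n : ℤ) : q2f (1 - n) = q2f n := by
  unfold q2f
  congr 1
  ring

lemma q2f_add_two (n : ℤ) : q2f (n + 2) = q2f n + 2*n + 1 := by
  have h1 := q2f_two n
  have h2 := q2f_two (n + 2)
  have h3 : (n+2) * ((n+2) - 1) = n * (n-1) + 2*(2*n+1) := by ring
  omega

/-- sign helpers -/
lemma pm_zpow_neg_s3 (e : ℚ) (he : e * e = 1) (T : ℤ) : e ^ (-T) = e ^ T := by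
  rcases mul_self_eq_one_iff.mp he with h | h <;> subst h
  · simp
  · rw [zpow_neg]
    have h2 : ((-1 : ℚ) ^ T) * ((-1 : ℚ) ^ T) = 1 := by
      rw [← zpow_add₀ (by norm_num : (-1:ℚ) ≠ 0)]
      have : T + T = 2 * T := by ring
      rw [this, zpow_mul]
      norm_num
    exact inv_eq_of_mul_eq_one_right h2

lemma pm_ne_zero_s3 (e : ℚ) (he : e * e = 1) : e ≠ 0 := by
  intro h; rw [h] at he; norm_num at he

lemma pm_zpow_add_one (e : ℚ) (he : e * e = 1) (T : ℤ) : e ^ (T + 1) = e * e ^ T := by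
  rw [zpow_add_one₀ (pm_ne_zero_s3 e he)]; ring

lemma pm_zpow_add_two (e : ℚ) (he : e * e = 1) (T : ℤ) : e ^ (T + 2) = e ^ T := by
  have : T + 2 = (T + 1) + 1 := by ring
  rw [this, pm_zpow_add_one e he, pm_zpow_add_one e he]
  rw [← mul_assoc, he, one_mul]

lemma pm_zpow_sub_s3 (e : ℚ) (he : e * e = 1) (c T : ℤ) : e ^ (c - T) = e ^ c * e ^ T := by
  rw [sub_eq_add_neg, zpow_add₀ (pm_ne_zero_s3 e he), pm_zpow_neg_s3 e he]

/-- exponent functions -/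
def Ef1 (n : ℤ) : ℤ := P * q2f n + k * n
def Ef2 (n : ℤ) : ℤ := P * n ^ 2 + k * n

/-- base double-coefficient functions -/
def D1 : ℤ × ℤ → ℚ := fun p => if Ef1 P k p.2 = p.1 then e1 ^ p.2 else 0
def D2 : ℤ × ℤ → ℚ := fun p => if Ef2 P k p.2 = p.1 then e2 ^ p.2 else 0
def Ddel : ℤ × ℤ → ℚ := fun p => if p = (0, 0) then 1 else 0

def Dconv (f g : ℤ × ℤ → ℚ) : ℤ × ℤ → ℚ :=
  fun p => ∑ᶠ u : ℤ × ℤ, f u * g (p.1 - u.1, p.2 - u.2)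

def Good (f : ℤ × ℤ → ℚ) : Prop :=
  (∃ B, ∀ p, f p ≠ 0 → B ≤ p.1) ∧ ∀ N, {T | f (N, T) ≠ 0}.Finite

def Dpow (f : ℤ × ℤ → ℚ) : ℕ → (ℤ × ℤ → ℚ)
  | 0 => Ddel
  | n + 1 => Dconv (Dpow f n) f

lemma good_Ddel : Good Ddel := by
  constructor
  · exact ⟨0, fun p hp => by
      by_contra h
      apply hp
      unfold Ddel
      rw [if_neg]
      intro hc
      rw [hc] at h
      exact h le_rfl⟩
  · intro N
    apply Set.Finite.subset (Set.finite_singleton (0 : ℤ))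
    intro T hT
    simp only [Set.mem_setOf_eq, Ddel] at hT
    by_contra h
    apply hT
    rw [if_neg]
    intro hc
    exact h (by simpa using congrArg Prod.snd hc)

lemma good_D1 (hP : 1 ≤ P) : Good (D1 P k e1) := by
  constructor
  · refine ⟨-(k^2 + P), fun p hp => ?_⟩
    unfold D1 at hp
    by_contra hlt
    apply hp
    rw [if_neg]
    intro hE
    apply hlt
    rw [← hE]
    unfold Ef1
    have h2 := q2f_two p.2
    nlinarith [sq_nonneg (2*p.2 + 2*k - 1), sq_nonneg (2*k + 1), q2f_nonneg p.2]
  · intro N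
    apply Set.Finite.subset (Set.finite_Icc (-(2*|N| + 2*|k| + 2)) (2*|N| + 2*|k| + 2))
    intro T hT
    simp only [Set.mem_setOf_eq, D1] at hT
    have hE : Ef1 P k T = N := by
      by_contra h; exact hT (if_neg h)
    unfold Ef1 at hE
    have h2 := q2f_two T
    simp only [Set.mem_Icc]
    constructor
    · nlinarith [le_abs_self N, neg_abs_le N, le_abs_self k, neg_abs_le k, abs_nonneg N,
        abs_nonneg k, sq_nonneg (T + 1), sq_nonneg T,
        mul_le_mul_of_nonneg_right hP (by nlinarith [sq_nonneg (2*T-1)] : (0:ℤ) ≤ T*(T-1))]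
    · nlinarith [le_abs_self N, neg_abs_le N, le_abs_self k, neg_abs_le k, abs_nonneg N,
        abs_nonneg k, sq_nonneg (T + 1), sq_nonneg T,
        mul_le_mul_of_nonneg_right hP (by nlinarith [sq_nonneg (2*T-1)] : (0:ℤ) ≤ T*(T-1))]

lemma good_D2 (hP : 1 ≤ P) : Good (D2 P k e2) := by
  constructor
  · refine ⟨-(k^2), fun p hp => ?_⟩
    unfold D2 at hp
    by_contra hlt
    apply hp
    rw [if_neg]
    intro hE
    apply hlt
    rw [← hE]
    unfold Ef2
    nlinarith [sq_nonneg (2*p.2 + k), sq_nonneg k, sq_nonneg p.2]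
  · intro N
    apply Set.Finite.subset (Set.finite_Icc (-(|N| + |k| + 1)) (|N| + |k| + 1))
    intro T hT
    simp only [Set.mem_setOf_eq, D2] at hT
    have hE : Ef2 P k T = N := by
      by_contra h; exact hT (if_neg h)
    unfold Ef2 at hE
    simp only [Set.mem_Icc]
    constructor
    · nlinarith [le_abs_self N, neg_abs_le N, le_abs_self k, neg_abs_le k, abs_nonneg N,
        abs_nonneg k, sq_nonneg T, mul_le_mul_of_nonneg_right hP (sq_nonneg T)]
    · nlinarith [le_abs_self N, neg_abs_le N, le_abs_self k, neg_abs_le k, abs_nonneg N,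
        abs_nonneg k, sq_nonneg T, mul_le_mul_of_nonneg_right hP (sq_nonneg T)]



/-- the support of the convolution integrand is finite -/
lemma conv_integrand_finite {f g : ℤ × ℤ → ℚ} (hf : Good f) (hg : Good g) (p : ℤ × ℤ) :
    (Function.support fun u : ℤ × ℤ => f u * g (p.1 - u.1, p.2 - u.2)).Finite := by
  obtain ⟨⟨Bf, hBf⟩, hfslice⟩ := hf
  obtain ⟨⟨Bg, hBg⟩, hgslice⟩ := hg
  apply Set.Finite.subset
    (Set.Finite.biUnion (Set.finite_Icc Bf (p.1 - Bg))
      (fun N1 _ => Set.Finite.prod (Set.finite_singleton N1) (hfslice N1)))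
  intro u hu
  simp only [Function.mem_support, ne_eq] at hu
  have hfu : f u ≠ 0 := fun h => hu (by rw [h, zero_mul])
  have hgu : g (p.1 - u.1, p.2 - u.2) ≠ 0 := fun h => hu (by rw [h, mul_zero])
  have h1 := hBf u hfu
  have h2 := hBg _ hgu
  simp only at h2
  simp only [Set.mem_iUnion, Set.mem_prod, Set.mem_singleton_iff, Set.mem_Icc, Set.mem_setOf_eq]
  refine ⟨u.1, ⟨h1, by omega⟩, rfl, ?_⟩
  show f (u.1, u.2) ≠ 0
  simpa using hfu

lemma good_conv {f g : ℤ × ℤ → ℚ} (hf : Good f) (hg : Good g) : Good (Dconv f g) := by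
  obtain ⟨⟨Bf, hBf⟩, hfslice⟩ := hf
  obtain ⟨⟨Bg, hBg⟩, hgslice⟩ := hg
  constructor
  · refine ⟨Bf + Bg, fun p hp => ?_⟩
    by_contra hlt
    apply hp
    apply finsum_eq_zero_of_forall_eq_zero
    intro u
    by_contra hu
    have hfu : f u ≠ 0 := fun h => hu (by rw [h, zero_mul])
    have hgu : g (p.1 - u.1, p.2 - u.2) ≠ 0 := fun h => hu (by rw [h, mul_zero])
    have h1 := hBf u hfu
    have h2 := hBg _ hgu
    simp only at h2
    omega
  · intro N
    apply Set.Finite.subset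
      (Set.Finite.biUnion (Set.finite_Icc Bf (N - Bg)) (fun N1 _ =>
        Set.Finite.biUnion (hfslice N1) (fun T1 _ =>
          Set.Finite.image (fun t => T1 + t) (hgslice (N - N1)))))
    intro T hT
    simp only [Set.mem_setOf_eq] at hT
    have hex : ∃ u : ℤ × ℤ, f u * g (N - u.1, T - u.2) ≠ 0 := by
      by_contra hc
      push_neg at hc
      exact hT (finsum_eq_zero_of_forall_eq_zero hc)
    obtain ⟨u, hu⟩ := hex
    have hfu : f u ≠ 0 := fun h => hu (by rw [h, zero_mul])
    have hgu : g (N - u.1, T - u.2) ≠ 0 := fun h => hu (by rw [h, mul_zero])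
    have h1 := hBf u hfu
    have h2 := hBg _ hgu
    simp only at h2
    simp only [Set.mem_iUnion, Set.mem_Icc, Set.mem_image, Set.mem_setOf_eq]
    refine ⟨u.1, ⟨h1, by omega⟩, u.2, ?_, T - u.2, hgu, by ring⟩
    show f (u.1, u.2) ≠ 0
    simpa using hfu

/-- helper: reindex a finsum along an equiv and pull out a constant -/
lemma finsum_mul_comp (e : ℚ) (φ : (ℤ × ℤ) ≃ (ℤ × ℤ)) (F G : ℤ × ℤ → ℚ)
    (hF : (Function.support F).Finite) (h : ∀ u, G u = e * F (φ u)) :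
    ∑ᶠ u, G u = e * ∑ᶠ u, F u := by
  have step1 : ∑ᶠ u, G u = ∑ᶠ u, (fun v => e * F v) (φ u) := finsum_congr h
  have step2 := finsum_comp_equiv φ (f := fun v => e * F v)
  rw [step1, step2]
  have hF' : (Function.support fun v => F v * e).Finite := by
    apply hF.subset
    intro v hv
    simp only [Function.mem_support, ne_eq] at hv ⊢
    intro h0; exact hv (by rw [h0, zero_mul])
  calc (∑ᶠ v, e * F v) = ∑ᶠ v, F v * e := finsum_congr fun v => mul_comm _ _
    _ = (∑ᶠ v, F v) * e := (finsum_mul F e).symm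
    _ = e * ∑ᶠ v, F v := mul_comm _ _

/-- symmetry properties -/
def Refl (c : ℤ) (e : ℚ) (f : ℤ × ℤ → ℚ) : Prop :=
  ∀ N T, f (N, T) = e * f (N + k * (c - 2 * T), c - T)

def Shift (δ β : ℤ) (e : ℚ) (f : ℤ × ℤ → ℚ) : Prop :=
  ∀ N T, f (N, T) = e * f (N + P * (2 * T + β) + k * δ, T + δ)

def Cong (f : ℤ × ℤ → ℚ) : Prop := ∀ N T, ¬ (M ∣ N - k * T) → f (N, T) = 0

/-- reindexing equivs -/
def reflEquiv (c : ℤ) : (ℤ × ℤ) ≃ (ℤ × ℤ) :=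
  Function.Involutive.toPerm (fun u => (u.1 + k * (c - 2 * u.2), c - u.2)) (by
    rintro ⟨u1, u2⟩
    simp only [Prod.mk.injEq]
    constructor <;> ring)

lemma reflEquiv_apply (c : ℤ) (u : ℤ × ℤ) :
    (reflEquiv k c) u = (u.1 + k * (c - 2 * u.2), c - u.2) := rfl

def shiftEquiv (δ β : ℤ) : (ℤ × ℤ) ≃ (ℤ × ℤ) where
  toFun u := (u.1 + P * (2 * u.2 + β) + k * δ, u.2 + δ)
  invFun u := (u.1 - P * (2 * (u.2 - δ) + β) - k * δ, u.2 - δ)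
  left_inv := by rintro ⟨u1, u2⟩; simp only [Prod.mk.injEq]; constructor <;> ring
  right_inv := by rintro ⟨u1, u2⟩; simp only [Prod.mk.injEq]; constructor <;> ring

lemma shiftEquiv_apply (δ β : ℤ) (u : ℤ × ℤ) :
    (shiftEquiv P k δ β) u = (u.1 + P * (2 * u.2 + β) + k * δ, u.2 + δ) := rfl

lemma refl_conv {f g : ℤ × ℤ → ℚ} {c1 c2 : ℤ} {a1 a2 : ℚ}
    (hf : Good f) (hg : Good g)
    (h1 : Refl k c1 a1 f) (h2 : Refl k c2 a2 g) :
    Refl k (c1 + c2) (a1 * a2) (Dconv f g) := by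
  intro N T
  unfold Dconv
  simp only
  apply finsum_mul_comp (a1 * a2) (reflEquiv k c1)
    (fun v => f v * g ((N + k * (c1 + c2 - 2 * T)) - v.1, (c1 + c2 - T) - v.2))
    _ (conv_integrand_finite hf hg (N + k * (c1 + c2 - 2 * T), c1 + c2 - T))
  rintro ⟨u1, u2⟩
  rw [reflEquiv_apply]
  simp only
  have harg : ((N - u1) + k * (c2 - 2 * (T - u2)), c2 - (T - u2)) =
      ((N + k * (c1 + c2 - 2 * T)) - (u1 + k * (c1 - 2 * u2)),
       (c1 + c2 - T) - (c1 - u2)) := by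
    simp only [Prod.mk.injEq]; constructor <;> ring
  rw [h1 u1 u2, h2 (N - u1) (T - u2), harg]
  ring

lemma shift_conv {f g : ℤ × ℤ → ℚ} {d1 d2 b1 b2 : ℤ} {a1 a2 : ℚ}
    (hf : Good f) (hg : Good g)
    (h1 : Shift P k d1 b1 a1 f) (h2 : Shift P k d2 b2 a2 g) :
    Shift P k (d1 + d2) (b1 + b2) (a1 * a2) (Dconv f g) := by
  intro N T
  unfold Dconv
  simp only
  apply finsum_mul_comp (a1 * a2) (shiftEquiv P k d1 b1)
    (fun v => f v * g ((N + P * (2 * T + (b1 + b2)) + k * (d1 + d2)) - v.1,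
      (T + (d1 + d2)) - v.2)) _
    (conv_integrand_finite hf hg (N + P * (2 * T + (b1 + b2)) + k * (d1 + d2), T + (d1 + d2)))
  rintro ⟨u1, u2⟩
  rw [shiftEquiv_apply]
  simp only
  have harg : ((N - u1) + P * (2 * (T - u2) + b2) + k * d2, (T - u2) + d2) =
      ((N + P * (2 * T + (b1 + b2)) + k * (d1 + d2)) - (u1 + P * (2 * u2 + b1) + k * d1),
       (T + (d1 + d2)) - (u2 + d1)) := by
    simp only [Prod.mk.injEq]; constructor <;> ring
  rw [h1 u1 u2, h2 (N - u1) (T - u2), harg]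
  ring

lemma cong_conv {f g : ℤ × ℤ → ℚ} (h1 : Cong k M f) (h2 : Cong k M g) :
    Cong k M (Dconv f g) := by
  intro N T hnd
  apply finsum_eq_zero_of_forall_eq_zero
  intro u
  by_contra hu
  have hfu : f u ≠ 0 := fun h => hu (by rw [h, zero_mul])
  have hgu : g (N - u.1, T - u.2) ≠ 0 := fun h => hu (by rw [h, mul_zero])
  have d1 : M ∣ u.1 - k * u.2 := by
    by_contra hc
    exact hfu (by rw [show u = (u.1, u.2) from rfl] at *; exact h1 u.1 u.2 hc)
  have d2 : M ∣ (N - u.1) - k * (T - u.2) := by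
    by_contra hc
    exact hgu (h2 _ _ hc)
  apply hnd
  have := dvd_add d1 d2
  rw [show N - k * T = (u.1 - k * u.2) + ((N - u.1) - k * (T - u.2)) by ring]
  exact this

/-- base symmetry lemmas -/
lemma refl_D1 (he1 : e1 * e1 = 1) : Refl k 1 e1 (D1 P k e1) := by
  intro N T
  unfold D1
  simp only
  have hcond : (Ef1 P k (1 - T) = N + k * (1 - 2 * T)) ↔ (Ef1 P k T = N) := by
    unfold Ef1
    rw [q2f_reflect]
    constructor <;> intro h <;> linarith
  by_cases h : Ef1 P k T = N
  · rw [if_pos h, if_pos (hcond.mpr h), pm_zpow_sub_s3 e1 he1, zpow_one]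
    rw [← mul_assoc, he1, one_mul]
  · rw [if_neg h, if_neg (fun hc => h (hcond.mp hc)), mul_zero]

lemma refl_D2 (he2 : e2 * e2 = 1) : Refl k 0 (1 : ℚ) (D2 P k e2) := by
  intro N T
  unfold D2
  simp only
  have hcond : (Ef2 P k (0 - T) = N + k * (0 - 2 * T)) ↔ (Ef2 P k T = N) := by
    unfold Ef2
    constructor <;> intro h <;> nlinarith [h]
  by_cases h : Ef2 P k T = N
  · rw [if_pos h, if_pos (hcond.mpr h), one_mul]
    rw [show (0 : ℤ) - T = -T by ring, pm_zpow_neg_s3 e2 he2]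
  · rw [if_neg h, if_neg (fun hc => h (hcond.mp hc))]
    norm_num

lemma refl_Ddel : Refl k 0 (1 : ℚ) Ddel := by
  intro N T
  unfold Ddel
  simp only [Prod.mk.injEq]
  by_cases hT : T = 0
  · subst hT
    norm_num
  · rw [if_neg (by tauto), if_neg (by intro h; exact hT (by omega)), mul_zero]

lemma shift_D1 (he1 : e1 * e1 = 1) : Shift P k 2 1 (1 : ℚ) (D1 P k e1) := by
  intro N T
  unfold D1
  simp only
  have hcond : (Ef1 P k (T + 2) = N + P * (2 * T + 1) + k * 2) ↔ (Ef1 P k T = N) := by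
    unfold Ef1
    rw [q2f_add_two]
    constructor <;> intro h <;> nlinarith [h]
  by_cases h : Ef1 P k T = N
  · rw [if_pos h, if_pos (hcond.mpr h), one_mul, pm_zpow_add_two e1 he1]
  · rw [if_neg h, if_neg (fun hc => h (hcond.mp hc)), mul_zero]

lemma shift_D2 (he2 : e2 * e2 = 1) : Shift P k 1 1 e2 (D2 P k e2) := by
  intro N T
  unfold D2
  simp only
  have hcond : (Ef2 P k (T + 1) = N + P * (2 * T + 1) + k * 1) ↔ (Ef2 P k T = N) := by
    unfold Ef2
    constructor <;> intro h <;> nlinarith [h]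
  by_cases h : Ef2 P k T = N
  · rw [if_pos h, if_pos (hcond.mpr h), pm_zpow_add_one e2 he2]
    rw [← mul_assoc, he2, one_mul]
  · rw [if_neg h, if_neg (fun hc => h (hcond.mp hc)), mul_zero]

lemma shift_Ddel : Shift P k 0 0 (1 : ℚ) Ddel := by
  intro N T
  unfold Ddel
  simp only [Prod.mk.injEq]
  by_cases hT : T = 0
  · subst hT
    norm_num
  · rw [if_neg (by tauto), if_neg (by rintro ⟨h1, h2⟩; exact hT (by omega)), mul_zero]

lemma cong_D1 (hMP : M ∣ P) : Cong k M (D1 P k e1) := by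
  intro N T h
  unfold D1
  simp only
  rw [if_neg]
  intro hE
  apply h
  have : N - k * T = P * q2f T := by unfold Ef1 at hE; linarith
  rw [this]
  exact Dvd.dvd.mul_right hMP _

lemma cong_D2 (hMP : M ∣ P) : Cong k M (D2 P k e2) := by
  intro N T h
  unfold D2
  simp only
  rw [if_neg]
  intro hE
  apply h
  have : N - k * T = P * T ^ 2 := by unfold Ef2 at hE; linarith
  rw [this]
  exact Dvd.dvd.mul_right hMP _

lemma cong_Ddel : Cong k M Ddel := by
  intro N T h
  unfold Ddel
  simp only [Prod.mk.injEq]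
  rw [if_neg]
  rintro ⟨h1, h2⟩
  exact h (by subst h1; subst h2; simp)

/-- power inductions -/
lemma good_pow {f : ℤ × ℤ → ℚ} (hf : Good f) : ∀ n, Good (Dpow f n)
  | 0 => good_Ddel
  | n + 1 => good_conv (good_pow hf n) hf

lemma refl_pow {f : ℤ × ℤ → ℚ} {c : ℤ} {a : ℚ} (hf : Good f) (hr : Refl k c a f) :
    ∀ n : ℕ, Refl k ((n : ℤ) * c) (a ^ n) (Dpow f n) := by
  intro n
  induction n with
  | zero => simpa [Dpow] using refl_Ddel k
  | succ n ih =>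
    have := refl_conv k (good_pow hf n) hf ih hr
    rw [show ((n + 1 : ℕ) : ℤ) * c = (n : ℤ) * c + c by push_cast; ring, pow_succ]
    exact this

lemma shift_pow {f : ℤ × ℤ → ℚ} {δ β : ℤ} {a : ℚ} (hf : Good f) (hs : Shift P k δ β a f) :
    ∀ n : ℕ, Shift P k ((n : ℤ) * δ) ((n : ℤ) * β) (a ^ n) (Dpow f n) := by
  intro n
  induction n with
  | zero => simpa [Dpow] using shift_Ddel P k
  | succ n ih =>
    have := shift_conv P k (good_pow hf n) hf ih hs
    rw [show ((n + 1 : ℕ) : ℤ) * δ = (n : ℤ) * δ + δ by push_cast; ring,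
        show ((n + 1 : ℕ) : ℤ) * β = (n : ℤ) * β + β by push_cast; ring, pow_succ]
    exact this

lemma cong_pow {f : ℤ × ℤ → ℚ} (hc : Cong k M f) : ∀ n, Cong k M (Dpow f n)
  | 0 => cong_Ddel k M
  | n + 1 => cong_conv k M (cong_pow hc n) hc

/-- iterated shift -/
lemma shift_iter {f : ℤ × ℤ → ℚ} {δ β : ℤ} {a : ℚ} (hs : Shift P k δ β a f) :
    ∀ (n : ℕ) (N T : ℤ), f (N, T) =
      a ^ n * f (N + P * (2 * (n : ℤ) * T + δ * ((n : ℤ) * ((n : ℤ) - 1)) + (n : ℤ) * β)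
        + k * ((n : ℤ) * δ), T + (n : ℤ) * δ) := by
  intro n
  induction n with
  | zero =>
    intro N T
    norm_num
  | succ n ih =>
    intro N T
    rw [ih N T, hs _ (T + (n : ℤ) * δ)]
    rw [show (T + (n : ℤ) * δ) + δ = T + ((n + 1 : ℕ) : ℤ) * δ by push_cast; ring]
    rw [show N + P * (2 * (n : ℤ) * T + δ * ((n : ℤ) * ((n : ℤ) - 1)) + (n : ℤ) * β)
        + k * ((n : ℤ) * δ) + P * (2 * (T + (n : ℤ) * δ) + β) + k * δ
      = N + P * (2 * ((n + 1 : ℕ) : ℤ) * T + δ * (((n + 1 : ℕ) : ℤ) * (((n + 1 : ℕ) : ℤ) - 1))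
        + ((n + 1 : ℕ) : ℤ) * β) + k * (((n + 1 : ℕ) : ℤ) * δ) by push_cast; ring]
    rw [pow_succ]
    ring

/-- the pointwise vanishing via reflection + iterated shift -/
lemma point_vanish {f : ℤ × ℤ → ℚ} {A B : ℤ}
    (he1 : e1 * e1 = 1) (he2 : e2 * e2 = 1) (he12 : e1 * e2 = -1)
    (hrefl : Refl k A e1 f) (hshift : Shift P k (2 * A + B) (A + B) e2 f)
    (N T w : ℤ) (hT : 2 * T = A + (2 * w + 1) * (2 * A + B)) :
    f (N, T) = 0 := by
  set Mδ := 2 * A + B with hMδ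
  have hsq2 : e2 ^ 2 = 1 := by rw [sq]; exact he2
  have hodd_pow : ∀ j : ℕ, Odd j → e2 ^ j = e2 := by
    intro j hj
    obtain ⟨i, hi⟩ := hj
    subst hi
    rw [pow_succ, pow_mul, hsq2, one_pow, one_mul]
  rcases le_or_gt 0 w with hw | hw
  · -- forward: reflect then shift (2w+1) times
    set n : ℕ := (2 * w + 1).toNat with hn
    have hnz : (n : ℤ) = 2 * w + 1 := Int.toNat_of_nonneg (by omega)
    have hoddn : Odd n := by
      refine ⟨w.toNat, ?_⟩
      omega
    have c1 := hrefl N T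
    have c2 := shift_iter P k hshift n (N + k * (A - 2 * T)) (A - T)
    rw [show (A - T) + (n : ℤ) * Mδ = T by rw [hnz]; linarith [hT]] at c2
    rw [show N + k * (A - 2 * T) + P * (2 * (n : ℤ) * (A - T) + Mδ * ((n : ℤ) * ((n : ℤ) - 1))
        + (n : ℤ) * (A + B)) + k * ((n : ℤ) * Mδ) = N by
      rw [hnz]; linear_combination (-k - P * (2 * w + 1)) * hT ] at c2
    rw [c2] at c1
    rw [hodd_pow n hoddn] at c1
    -- c1 : f (N, T) = e1 * (e2 * f (N, T))
    have : (1 - e1 * e2) * f (N, T) = 0 := by linear_combination c1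
    rw [he12] at this
    linarith
  · -- backward: shift n = -(2w+1) times equals the reflection target
    set n : ℕ := (-(2 * w + 1)).toNat with hn
    have hnz : (n : ℤ) = -(2 * w + 1) := Int.toNat_of_nonneg (by omega)
    have hoddn : Odd n := by
      refine ⟨(-w-1).toNat, ?_⟩
      omega
    have c1 := hrefl N T
    have c2 := shift_iter P k hshift n N T
    rw [show T + (n : ℤ) * Mδ = A - T by rw [hnz]; linarith [hT]] at c2
    rw [show N + P * (2 * (n : ℤ) * T + Mδ * ((n : ℤ) * ((n : ℤ) - 1)) + (n : ℤ) * (A + B))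
        + k * ((n : ℤ) * Mδ) = N + k * (A - 2 * T) by
      rw [hnz]; linear_combination (k - P * (2 * w + 1)) * hT ] at c2
    rw [hodd_pow n hoddn] at c2
    -- c1 : f (N,T) = e1 * Y ; c2 : f (N,T) = e2 * Y
    have hY : (e1 - e2) * f (N + k * (A - 2 * T), A - T) = 0 := by linear_combination c2 - c1
    have hne : e1 - e2 ≠ 0 := by
      intro h
      have : e1 = e2 := by linarith
      rw [this, he2] at he12
      norm_num at he12
    have hY0 : f (N + k * (A - 2 * T), A - T) = 0 := by
      rcases mul_eq_zero.mp hY with h | h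
      · exact absurd h hne
      · exact h
    rw [c1, hY0, mul_zero]

/-- collapse: sum out the T-grading -/
def collapse (f : ℤ × ℤ → ℚ) : ℤ → ℚ := fun N => ∑ᶠ T, f (N, T)

lemma collapse_slice_finite {f : ℤ × ℤ → ℚ} (hf : Good f) (N : ℤ) :
    (Function.support fun T => f (N, T)).Finite := hf.2 N

lemma collapse_lb {f : ℤ × ℤ → ℚ} {Bf : ℤ} (hBf : ∀ p, f p ≠ 0 → Bf ≤ p.1) (N : ℤ)
    (h : collapse f N ≠ 0) : Bf ≤ N := by
  unfold collapse at h
  have : ∃ T, f (N, T) ≠ 0 := by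
    by_contra hc
    push_neg at hc
    exact h (finsum_eq_zero_of_forall_eq_zero hc)
  obtain ⟨T, hT⟩ := this
  exact hBf _ hT

lemma good_upper_finite {f : ℤ × ℤ → ℚ} (hf : Good f) (hi : ℤ) :
    {u : ℤ × ℤ | f u ≠ 0 ∧ u.1 ≤ hi}.Finite := by
  obtain ⟨⟨Bf, hBf⟩, hfslice⟩ := hf
  apply Set.Finite.subset
    (Set.Finite.biUnion (Set.finite_Icc Bf hi)
      (fun N1 _ => Set.Finite.prod (Set.finite_singleton N1) (hfslice N1)))
  rintro u ⟨hu, hui⟩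
  have h1 := hBf u hu
  simp only [Set.mem_iUnion, Set.mem_prod, Set.mem_singleton_iff, Set.mem_Icc, Set.mem_setOf_eq]
  refine ⟨u.1, ⟨h1, hui⟩, rfl, ?_⟩
  show f (u.1, u.2) ≠ 0
  simpa using hu

lemma collapse_Ddel (N : ℤ) : collapse Ddel N = if N = 0 then 1 else 0 := by
  unfold collapse
  rw [finsum_eq_single _ (0 : ℤ)]
  · unfold Ddel
    by_cases h : N = 0
    · subst h; norm_num
    · rw [if_neg h, if_neg (by simp [Prod.ext_iff, h])]
  · intro T hT
    unfold Ddel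
    rw [if_neg (by simp [Prod.ext_iff, hT])]

/-- collapse of a convolution is the 1-d convolution of collapses -/
lemma collapse_conv {f g : ℤ × ℤ → ℚ} (hf : Good f) (hg : Good g) (N : ℤ) :
    collapse (Dconv f g) N = ∑ᶠ ν : ℤ, collapse f ν * collapse g (N - ν) := by
  obtain ⟨⟨Bf, hBf⟩, hfslice⟩ := hf
  obtain ⟨⟨Bg, hBg⟩, hgslice⟩ := hg
  have hfG : Good f := ⟨⟨Bf, hBf⟩, hfslice⟩
  have hgG : Good g := ⟨⟨Bg, hBg⟩, hgslice⟩
  -- the big double-indexed function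
  set F : ℤ × (ℤ × ℤ) → ℚ := fun w => f w.2 * g (N - w.2.1, w.1 - w.2.2) with hF
  have hU : {u : ℤ × ℤ | f u ≠ 0 ∧ u.1 ≤ N - Bg}.Finite := good_upper_finite hfG (N - Bg)
  have hFsupp : (Function.support F).Finite := by
    apply Set.Finite.subset (Set.Finite.biUnion hU (fun u _ =>
      Set.Finite.prod (Set.Finite.image (fun t => u.2 + t) (hgslice (N - u.1)))
        (Set.finite_singleton u)))
    intro w hw
    simp only [Function.mem_support, ne_eq, hF] at hw
    have hfu : f w.2 ≠ 0 := fun h => hw (by rw [h, zero_mul])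
    have hgu : g (N - w.2.1, w.1 - w.2.2) ≠ 0 := fun h => hw (by rw [h, mul_zero])
    have h2 := hBg _ hgu
    simp only at h2
    simp only [Set.mem_iUnion, Set.mem_prod, Set.mem_image, Set.mem_singleton_iff,
      Set.mem_setOf_eq]
    exact ⟨w.2, ⟨hfu, by omega⟩, ⟨w.1 - w.2.2, hgu, by ring⟩, rfl⟩
  have hFswap : (Function.support fun w : (ℤ × ℤ) × ℤ => F (w.2, w.1)).Finite := by
    have hsub : (Function.support fun w : (ℤ × ℤ) × ℤ => F (w.2, w.1)) ⊆
        (fun v : ℤ × (ℤ × ℤ) => (v.2, v.1)) '' (Function.support F) := by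
      intro w hw
      exact ⟨(w.2, w.1), hw, rfl⟩
    exact Set.Finite.subset (Set.Finite.image _ hFsupp) hsub
  calc collapse (Dconv f g) N
      = ∑ᶠ T, ∑ᶠ u : ℤ × ℤ, F (T, u) := rfl
    _ = ∑ᶠ w : ℤ × (ℤ × ℤ), F w := (finsum_curry F hFsupp).symm
    _ = ∑ᶠ w : (ℤ × ℤ) × ℤ, F ((Equiv.prodComm (ℤ × ℤ) ℤ) w) := by
        exact (finsum_comp_equiv (Equiv.prodComm (ℤ × ℤ) ℤ) (f := fun w => F w)).symm
    _ = ∑ᶠ u : ℤ × ℤ, ∑ᶠ T : ℤ, F (T, u) := by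
        exact finsum_curry _ hFswap
    _ = ∑ᶠ u : ℤ × ℤ, f u * collapse g (N - u.1) := by
        apply finsum_congr
        intro u
        have hslice : (Function.support fun T => g (N - u.1, T - u.2)).Finite := by
          apply Set.Finite.subset (Set.Finite.image (fun t => u.2 + t) (hgslice (N - u.1)))
          intro T hT
          exact ⟨T - u.2, hT, by ring⟩
        calc (∑ᶠ T, f u * g (N - u.1, T - u.2))
            = ∑ᶠ T, g (N - u.1, T - u.2) * f u := finsum_congr fun T => mul_comm _ _
          _ = (∑ᶠ T, g (N - u.1, T - u.2)) * f u := (finsum_mul _ _).symm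
          _ = (∑ᶠ T, g (N - u.1, T)) * f u := by
              rw [show (∑ᶠ T, g (N - u.1, T - u.2))
                  = ∑ᶠ T, (fun t => g (N - u.1, t)) ((Equiv.subRight u.2) T) from rfl,
                finsum_comp_equiv (Equiv.subRight u.2) (f := fun t => g (N - u.1, t))]
          _ = f u * collapse g (N - u.1) := mul_comm _ _
    _ = ∑ᶠ ν : ℤ, ∑ᶠ τ : ℤ, f (ν, τ) * collapse g (N - ν) := by
        apply finsum_curry
        apply Set.Finite.subset hU
        intro u hu
        simp only [Function.mem_support, ne_eq] at hu
        have hfu : f u ≠ 0 := fun h => hu (by rw [h, zero_mul])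
        have hgu : collapse g (N - u.1) ≠ 0 := fun h => hu (by rw [h, mul_zero])
        exact ⟨hfu, by have := collapse_lb hBg (N - u.1) hgu; omega⟩
    _ = ∑ᶠ ν : ℤ, collapse f ν * collapse g (N - ν) := by
        apply finsum_congr
        intro ν
        rw [← finsum_mul _ _]
        rfl

/-- HahnSeries product coefficient as a finsum -/
lemma hs_mul_coeff (F G : LaurentSeries ℚ) (N : ℤ) :
    (F * G).coeff N = ∑ᶠ ν : ℤ, F.coeff ν * G.coeff (N - ν) := by
  rw [HahnSeries.coeff_mul]
  set A := Finset.antidiagonal F.isPWO_support G.isPWO_support N with hA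
  have hsub : (Function.support fun ν => F.coeff ν * G.coeff (N - ν)) ⊆ ↑(A.image Prod.fst) := by
    intro ν hν
    simp only [Function.mem_support, ne_eq] at hν
    have h1 : F.coeff ν ≠ 0 := fun h => hν (by rw [h, zero_mul])
    have h2 : G.coeff (N - ν) ≠ 0 := fun h => hν (by rw [h, mul_zero])
    simp only [Finset.coe_image, Set.mem_image, Finset.mem_coe]
    refine ⟨(ν, N - ν), ?_, rfl⟩
    rw [hA, Finset.mem_addAntidiagonal]
    exact ⟨h1, h2, by ring⟩
  rw [finsum_eq_finset_sum_of_support_subset _ hsub,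
    Finset.sum_image (fun x hx y hy hxy => by
      rw [hA, Finset.mem_coe, Finset.mem_addAntidiagonal] at hx hy
      have h2 : x.2 = y.2 := by omega
      exact Prod.ext hxy h2)]
  apply Finset.sum_congr rfl
  intro ij hij
  rw [hA, Finset.mem_addAntidiagonal] at hij
  rw [show N - ij.1 = ij.2 by omega]

lemma pm_pow_odd (e : ℚ) (he : e * e = 1) {n : ℕ} (hn : Odd n) : e ^ n = e := by
  obtain ⟨j, hj⟩ := hn
  subst hj
  rw [pow_succ, pow_mul, show e ^ 2 = 1 by rw [sq]; exact he, one_pow, one_mul]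

/-- collapse of D1 gives the theta coefficients of `f(ε q^k, ε q^{P-k})` -/
lemma collapse_D1_eq (ε : ℤ) (N : ℤ) :
    collapse (D1 P k ((ε : ℚ))) N =
      ∑ᶠ n : ℤ, if k * (n * (n + 1) / 2) + (P - k) * (n * (n - 1) / 2) = N
        then ((ε : ℚ)) ^ n else 0 := by
  unfold collapse D1
  apply finsum_congr
  intro n
  simp only
  have hq : n * (n + 1) / 2 = q2f n + n := by
    obtain ⟨c, hc⟩ := Int.even_mul_succ_self n
    have h2 := q2f_two n
    have h3 : n * (n + 1) = n * (n - 1) + 2 * n := by ring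
    omega
  have hcond : (Ef1 P k n = N) ↔
      (k * (n * (n + 1) / 2) + (P - k) * (n * (n - 1) / 2) = N) := by
    rw [hq]
    unfold Ef1 q2f
    constructor <;> intro h <;> linarith
  exact if_congr hcond rfl rfl

/-- collapse of D2 gives the theta coefficients of `f(ε q^{P+k}, ε q^{P-k})` -/
lemma collapse_D2_eq (ε : ℤ) (N : ℤ) :
    collapse (D2 P k ((ε : ℚ))) N =
      ∑ᶠ n : ℤ, if (P + k) * (n * (n + 1) / 2) + (P - k) * (n * (n - 1) / 2) = N
        then ((ε : ℚ)) ^ n else 0 := by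
  unfold collapse D2
  apply finsum_congr
  intro n
  simp only
  have hq : n * (n + 1) / 2 = n * (n - 1) / 2 + n := by
    obtain ⟨c, hc⟩ := Int.even_mul_succ_self n
    obtain ⟨e, he⟩ := Int.even_mul_pred_self n
    have h3 : n * (n + 1) = n * (n - 1) + 2 * n := by ring
    omega
  have hq2 : n * (n + 1) / 2 + n * (n - 1) / 2 = n ^ 2 := by
    obtain ⟨c, hc⟩ := Int.even_mul_succ_self n
    obtain ⟨e, he⟩ := Int.even_mul_pred_self n
    have h3 : n * (n + 1) + n * (n - 1) = 2 * n ^ 2 := by ring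
    omega
  have hcond : (Ef2 P k n = N) ↔
      ((P + k) * (n * (n + 1) / 2) + (P - k) * (n * (n - 1) / 2) = N) := by
    unfold Ef2
    constructor <;> intro h
    · linear_combination h + P * hq2 + k * hq
    · linear_combination h - P * hq2 - k * hq
  exact if_congr hcond rfl rfl

/-- coefficients of powers via iterated convolution -/
lemma pow_coeff_collapse {θ : LaurentSeries ℚ} {D : ℤ × ℤ → ℚ} (hD : Good D)
    (hθ : ∀ N, θ.coeff N = collapse D N) :
    ∀ (n : ℕ) (N : ℤ), (θ ^ n).coeff N = collapse (Dpow D n) N := by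
  intro n
  induction n with
  | zero =>
    intro N
    rw [pow_zero, HahnSeries.coeff_one, show Dpow D 0 = Ddel from rfl, collapse_Ddel]
    split_ifs <;> rfl
  | succ n ih =>
    intro N
    rw [pow_succ, hs_mul_coeff]
    calc (∑ᶠ ν : ℤ, (θ ^ n).coeff ν * θ.coeff (N - ν))
        = ∑ᶠ ν : ℤ, collapse (Dpow D n) ν * collapse D (N - ν) := by
          apply finsum_congr
          intro ν
          rw [ih, hθ]
      _ = collapse (Dconv (Dpow D n) D) N := (collapse_conv (good_pow hD n) hD N).symm
      _ = collapse (Dpow D (n + 1)) N := rfl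

end Engine

section Main

lemma theta_coeff_eq {ε r s : ℤ} (h : 0 < r + s) (N : ℤ) :
    (theta ε r s).coeff N = thetaCoeff ε r s N := by
  unfold theta
  rw [dif_pos h]

/-- core vanishing lemma -/
lemma core (μ ℓ m k M σ : ℤ) (ε1 ε2 : ℤ) (hμ : 1 ≤ μ) (hℓ : 0 ≤ ℓ) (hm : 0 ≤ m)
    (hM : M = 4 * ℓ + 2 * m + 3) (hσ : σ = -(3 * ℓ + m + 2) * k)
    (he1 : (ε1 : ℚ) * (ε1 : ℚ) = 1) (he2 : (ε2 : ℚ) * (ε2 : ℚ) = 1)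
    (he12 : (ε1 : ℚ) * (ε2 : ℚ) = -1)
    (hk : Int.gcd k M = 1) :
    huff M (HahnSeries.single σ (1 : ℚ)
      * theta ε1 k (μ * M - k) ^ (2 * ℓ + 1)
      * theta ε2 (μ * M + k) (μ * M - k) ^ (2 * m + 1)) = 0 := by
  have hM3 : 3 ≤ M := by omega
  set P := μ * M with hPdef
  have hP1 : 1 ≤ P := by nlinarith
  have hMP : M ∣ P := dvd_mul_left M μ
  set a' : ℕ := (2 * ℓ + 1).toNat with ha'
  set b' : ℕ := (2 * m + 1).toNat with hb'
  have haZ : (a' : ℤ) = 2 * ℓ + 1 := Int.toNat_of_nonneg (by omega)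
  have hbZ : (b' : ℤ) = 2 * m + 1 := Int.toNat_of_nonneg (by omega)
  have hodda : Odd a' := ⟨ℓ.toNat, by omega⟩
  have hoddb : Odd b' := ⟨m.toNat, by omega⟩
  have hz1 : theta ε1 k (P - k) ^ (2 * ℓ + 1) = theta ε1 k (P - k) ^ a' := by
    rw [← haZ, zpow_natCast]
  have hz2 : theta ε2 (P + k) (P - k) ^ (2 * m + 1) = theta ε2 (P + k) (P - k) ^ b' := by
    rw [← hbZ, zpow_natCast]
  have harg1 : μ * M - k = P - k := by rw [hPdef]
  have harg2 : μ * M + k = P + k := by rw [hPdef]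
  rw [harg1, harg2, hz1, hz2]
  -- coefficient bridges
  have hg1 : Good (D1 P k ((ε1 : ℚ))) := good_D1 P k _ hP1
  have hg2 : Good (D2 P k ((ε2 : ℚ))) := good_D2 P k _ hP1
  have hrs1 : (0 : ℤ) < k + (P - k) := by
    have : k + (P - k) = P := by ring
    rw [this]; omega
  have hrs2 : (0 : ℤ) < (P + k) + (P - k) := by
    have : (P + k) + (P - k) = 2 * P := by ring
    rw [this]; omega
  have hθ1 : ∀ N, (theta ε1 k (P - k)).coeff N = collapse (D1 P k ((ε1 : ℚ))) N := by
    intro N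
    rw [theta_coeff_eq hrs1, collapse_D1_eq]
    rfl
  have hθ2 : ∀ N, (theta ε2 (P + k) (P - k)).coeff N = collapse (D2 P k ((ε2 : ℚ))) N := by
    intro N
    rw [theta_coeff_eq hrs2, collapse_D2_eq]
    rfl
  set DP := Dconv (Dpow (D1 P k ((ε1 : ℚ))) a') (Dpow (D2 P k ((ε2 : ℚ))) b') with hDP
  have hprod : ∀ N, (theta ε1 k (P - k) ^ a' * theta ε2 (P + k) (P - k) ^ b').coeff N
      = collapse DP N := by
    intro N
    rw [hs_mul_coeff]
    calc (∑ᶠ ν : ℤ, (theta ε1 k (P - k) ^ a').coeff ν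
            * (theta ε2 (P + k) (P - k) ^ b').coeff (N - ν))
        = ∑ᶠ ν : ℤ, collapse (Dpow (D1 P k ((ε1 : ℚ))) a') ν
            * collapse (Dpow (D2 P k ((ε2 : ℚ))) b') (N - ν) := by
          apply finsum_congr
          intro ν
          rw [pow_coeff_collapse hg1 hθ1, pow_coeff_collapse hg2 hθ2]
      _ = collapse DP N := (collapse_conv (good_pow hg1 a') (good_pow hg2 b') N).symm
  -- symmetries of DP
  have hrefl : Refl k ((a' : ℤ)) ((ε1 : ℚ)) DP := by
    have h1 := refl_pow k hg1 (refl_D1 P k _ he1) a'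
    have h2 := refl_pow k hg2 (refl_D2 P k _ he2) b'
    have h3 := refl_conv k (good_pow hg1 a') (good_pow hg2 b') h1 h2
    rw [show ((a' : ℤ) * 1 + (b' : ℤ) * 0) = (a' : ℤ) by ring, one_pow, mul_one,
      pm_pow_odd _ he1 hodda] at h3
    exact h3
  have hshift : Shift P k (2 * (a' : ℤ) + (b' : ℤ)) ((a' : ℤ) + (b' : ℤ)) ((ε2 : ℚ)) DP := by
    have h1 := shift_pow P k hg1 (shift_D1 P k _ he1) a'
    have h2 := shift_pow P k hg2 (shift_D2 P k _ he2) b'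
    have h3 := shift_conv P k (good_pow hg1 a') (good_pow hg2 b') h1 h2
    rw [show ((a' : ℤ) * 2 + (b' : ℤ) * 1) = 2 * (a' : ℤ) + (b' : ℤ) by ring,
      show ((a' : ℤ) * 1 + (b' : ℤ) * 1) = (a' : ℤ) + (b' : ℤ) by ring,
      one_pow, one_mul, pm_pow_odd _ he2 hoddb] at h3
    exact h3
  have hcong : Cong k M DP :=
    cong_conv k M (cong_pow k M (cong_D1 P k M _ hMP) a') (cong_pow k M (cong_D2 P k M _ hMP) b')
  -- conclude
  apply HahnSeries.ext
  funext N
  rw [HahnSeries.coeff_zero]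
  show (if M ∣ N then _ else 0) = 0
  by_cases hdvd : M ∣ N
  · rw [if_pos hdvd]
    rw [mul_assoc]
    have hsingle : (HahnSeries.single σ (1 : ℚ)
        * (theta ε1 k (P - k) ^ a' * theta ε2 (P + k) (P - k) ^ b')).coeff N
        = (theta ε1 k (P - k) ^ a' * theta ε2 (P + k) (P - k) ^ b').coeff (N - σ) := by
      have h := HahnSeries.coeff_single_mul_add (r := (1 : ℚ))
        (x := theta ε1 k (P - k) ^ a' * theta ε2 (P + k) (P - k) ^ b') (a := N - σ) (b := σ)
      rw [show N - σ + σ = N by ring, one_mul] at h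
      exact h
    rw [hsingle, hprod]
    unfold collapse
    apply finsum_eq_zero_of_forall_eq_zero
    intro T
    by_cases hTd : M ∣ (N - σ) - k * T
    · -- use the reflection--shift chain
      have hCT : M ∣ ((3 * ℓ + m + 2) - T) * k := by
        have h1 : (N - σ - k * T) - N = ((3 * ℓ + m + 2) - T) * k := by rw [hσ]; ring
        have h2 := dvd_sub hTd hdvd
        rwa [h1] at h2
      have hTC : M ∣ (3 * ℓ + m + 2) - T :=
        Int.dvd_of_dvd_mul_left_of_gcd_one hCT (by rw [Int.gcd_comm]; exact hk)
      obtain ⟨v, hv⟩ := hTC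
      apply point_vanish P k ((ε1 : ℚ)) ((ε2 : ℚ)) he1 he2 he12 hrefl hshift (N - σ) T (-v)
      rw [haZ, hbZ, hM] at *
      linear_combination (-2 : ℤ) * hv
    · exact hcong _ _ hTd
  · rw [if_neg hdvd]

end Main

/-- **Theorem (Type I.2, eq. (1.7))**: with `M = 4ℓ + 2m + 3` and
`σ = -(3ℓ + m + 2)k`, for `(κ, λ) ∈ {(0,1), (1,0)}` and `gcd(k, M) = 1`,
`H_M(q^σ · f((-1)^κ q^k, (-1)^κ q^{μM-k})^{2ℓ+1} ·
  f((-1)^λ q^{μM+k}, (-1)^λ q^{μM-k})^{2m+1}) = 0`. -/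
theorem statement3 (μ ℓ m k M σ : ℤ) (hμ : 1 ≤ μ) (hℓ : 0 ≤ ℓ) (hm : 0 ≤ m)
    (hM : M = 4 * ℓ + 2 * m + 3) (hσ : σ = -(3 * ℓ + m + 2) * k)
    (κ lam : ℕ) (hκlam : (κ = 0 ∧ lam = 1) ∨ (κ = 1 ∧ lam = 0))
    (hk : Int.gcd k M = 1) :
    huff M (HahnSeries.single σ (1 : ℚ)
      * theta ((-1) ^ κ) k (μ * M - k) ^ (2 * ℓ + 1)
      * theta ((-1) ^ lam) (μ * M + k) (μ * M - k) ^ (2 * m + 1)) = 0 := by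
  rcases hκlam with ⟨hκ, hlam⟩ | ⟨hκ, hlam⟩ <;> subst hκ <;> subst hlam <;>
    exact core μ ℓ m k M σ _ _ hμ hℓ hm hM hσ (by norm_num) (by norm_num) (by norm_num) hk

end ThetaVanish
end
end

section
/- Let μ ≥ 1, ℓ ≥ 0, m ≥ 0 be integers, set M = 4ℓ + 2m + 3 and σ = −(ℓ + m + 1)·k. Then for every pair (κ, λ) ∈ {(0,1), (1,0)} and every integer k with gcd(k, M) = 1, one has H_M( q^σ · f((−1)^κ q^k, (−1)^κ q^{μM−k})^{2ℓ+1} · f((−1)^λ q^k, (−1)^λ q^{2μM−k})^{2m+1} ) = 0. -/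
/-!
Common setup: Ramanujan theta series as formal Laurent series over `ℚ`
(`LaurentSeries ℚ = HahnSeries ℤ ℚ`), and the huffing operator `H_M`.
-/

noncomputable section

open scoped Classical

namespace ThetaVanish

def tri (n : ℤ) : ℤ := n * (n - 1) / 2

theorem two_tri (n : ℤ) : 2 * tri n = n * (n - 1) := by
  obtain ⟨e, he⟩ := Int.even_mul_pred_self n
  unfold tri; omega

structure IsRep {ι : Type} (e : ι → ℤ) (c : ι → ℚ) (A : LaurentSeries ℚ) : Prop where
  lb : ∃ L : ℤ, ∀ i, L ≤ e i
  fin : ∀ N : ℤ, {i | e i = N}.Finite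
  coeff_eq : ∀ (N : ℤ) (h : {i | e i = N}.Finite), A.coeff N = ∑ i ∈ h.toFinset, c i

variable {ι κ : Type}

theorem IsRep.congr {e e' : ι → ℤ} {c c' : ι → ℚ} {A : LaurentSeries ℚ}
    (h : IsRep e c A) (he : e = e') (hc : c = c') : IsRep e' c' A := he ▸ hc ▸ h

/-- the summable family of monomials attached to a representation -/
def repFamily (e : κ → ℤ) (c : κ → ℚ) (L : ℤ) (hL : ∀ j, L ≤ e j)
    (hfin : ∀ N : ℤ, {j | e j = N}.Finite) : HahnSeries.SummableFamily ℤ ℚ κ where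
  toFun j := HahnSeries.single (e j) (c j)
  isPWO_iUnion_support' := by
    apply isPWO_of_subset_Ici (a := L)
    intro g hg
    simp only [Set.mem_iUnion] at hg
    obtain ⟨j, hj⟩ := hg
    have := HahnSeries.support_single_subset hj
    simp only [Set.mem_singleton_iff] at this
    exact this ▸ hL j
  finite_co_support' g := by
    apply (hfin g).subset
    intro j hj
    simp only [Set.mem_setOf_eq, HahnSeries.coeff_single] at hj
    by_contra hne
    simp only [Set.mem_setOf_eq] at hne
    rw [if_neg (fun hh => hne hh.symm)] at hj
    exact hj rfl

theorem repFamily_hsum {e : κ → ℤ} {c : κ → ℚ} {L : ℤ} {hL : ∀ j, L ≤ e j}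
    {hfin : ∀ N : ℤ, {j | e j = N}.Finite} {B : LaurentSeries ℚ}
    (hB : IsRep e c B) : (repFamily e c L hL hfin).hsum = B := by
  ext g
  rw [HahnSeries.SummableFamily.coeff_hsum]
  have hfun : ∀ i, (repFamily e c L hL hfin) i = HahnSeries.single (e i) (c i) := fun i => rfl
  simp only [hfun]
  have hsupp : Function.support (fun j => (HahnSeries.single (e j) (c j)).coeff g)
      ⊆ ((hfin g).toFinset : Set κ) := by
    intro j hj
    simp only [Function.mem_support, HahnSeries.coeff_single] at hj
    simp only [Finset.coe_sort_coe, Set.Finite.coe_toFinset, Set.mem_setOf_eq]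
    by_contra hne
    rw [if_neg (fun hh => hne hh.symm)] at hj
    exact hj rfl
  rw [finsum_eq_sum_of_support_subset _ hsupp]
  rw [hB.coeff_eq g (hfin g)]
  apply Finset.sum_congr rfl
  intro j hj
  simp only [Set.Finite.mem_toFinset, Set.mem_setOf_eq] at hj
  simp [HahnSeries.coeff_single, hj]


theorem IsRep.mul {A B : LaurentSeries ℚ} {eA : ι → ℤ} {cA : ι → ℚ} {eB : κ → ℤ} {cB : κ → ℚ}
    (hA : IsRep eA cA A) (hB : IsRep eB cB B) :
    IsRep (fun p : ι × κ => eA p.1 + eB p.2) (fun p => cA p.1 * cB p.2) (A * B) := by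
  obtain ⟨LA, hLA⟩ := hA.lb
  obtain ⟨LB, hLB⟩ := hB.lb
  have hfinAB : ∀ N : ℤ, {p : ι × κ | eA p.1 + eB p.2 = N}.Finite := by
    intro N
    apply Set.Finite.subset (Set.Finite.biUnion (Set.finite_Icc LA (N - LB))
      (fun v (_ : v ∈ Set.Icc LA (N - LB)) => (hA.fin v).prod (hB.fin (N - v))))
    rintro ⟨i, j⟩ h
    simp only [Set.mem_setOf_eq] at h
    have h1 := hLA i
    have h2 := hLB j
    apply Set.mem_biUnion (show eA i ∈ Set.Icc LA (N - LB) from ⟨h1, by omega⟩)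
    exact ⟨rfl, by simp only [Set.mem_setOf_eq]; omega⟩
  refine ⟨⟨LA + LB, fun p => add_le_add (hLA p.1) (hLB p.2)⟩, hfinAB, ?_⟩
  intro N hfinN
  have hprod : A * B = (A • (repFamily eB cB LB hLB hB.fin)).hsum := by
    rw [HahnSeries.SummableFamily.hsum_smul, repFamily_hsum hB]
  rw [hprod, HahnSeries.SummableFamily.coeff_hsum]
  have happ : ∀ j, ((A • (repFamily eB cB LB hLB hB.fin)) j).coeff N
      = A.coeff (N - eB j) * cB j := by
    intro j
    have h1 : ((A • (repFamily eB cB LB hLB hB.fin)) j) = A * HahnSeries.single (eB j) (cB j) := by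
      rw [HahnSeries.SummableFamily.smul_apply]
      exact HahnSeries.of_symm_smul_of_eq_mul
    rw [h1]
    have := HahnSeries.coeff_mul_single_add (r := cB j) (x := A) (a := N - eB j) (b := eB j)
    rwa [sub_add_cancel] at this
  simp only [happ]
  -- outer support
  set J : Finset κ := hfinN.toFinset.image Prod.snd with hJ
  have hsupp : Function.support (fun j => A.coeff (N - eB j) * cB j) ⊆ (J : Set κ) := by
    intro j hj
    simp only [Function.mem_support] at hj
    have hAne : A.coeff (N - eB j) ≠ 0 := fun h0 => hj (by rw [h0, zero_mul])
    rw [hA.coeff_eq _ (hA.fin (N - eB j))] at hAne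
    obtain ⟨i, hi, -⟩ := Finset.exists_ne_zero_of_sum_ne_zero hAne
    simp only [Set.Finite.mem_toFinset, Set.mem_setOf_eq] at hi
    simp only [hJ, Finset.coe_image, Set.mem_image, Finset.mem_coe]
    exact ⟨(i, j), by simp only [Set.Finite.mem_toFinset, Set.mem_setOf_eq]; omega, rfl⟩
  rw [finsum_eq_sum_of_support_subset _ hsupp]
  have hfiber := Finset.sum_fiberwise_of_maps_to (g := Prod.snd) (t := J)
    (fun p hp => Finset.mem_image_of_mem Prod.snd hp) (fun p : ι × κ => cA p.1 * cB p.2)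
  rw [← hfiber]
  apply Finset.sum_congr rfl
  intro j hj
  rw [hA.coeff_eq _ (hA.fin (N - eB j)), Finset.sum_mul]
  apply Finset.sum_nbij' (i := fun i => ((i, j) : ι × κ)) (j := fun p => p.1)
  · intro i hi
    simp only [Set.Finite.mem_toFinset, Set.mem_setOf_eq] at hi
    exact Finset.mem_filter.mpr ⟨(Set.Finite.mem_toFinset _).mpr (by simp only [Set.mem_setOf_eq]; omega), rfl⟩
  · rintro ⟨i1, j1⟩ hp
    obtain ⟨hmem, heq⟩ := Finset.mem_filter.mp hp
    simp only at heq
    subst heq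
    simp only [Set.Finite.mem_toFinset, Set.mem_setOf_eq] at hmem ⊢
    omega
  · intro i _; rfl
  · rintro ⟨i1, j1⟩ hp
    obtain ⟨hmem, heq⟩ := Finset.mem_filter.mp hp
    simp only at heq
    subst heq
    rfl
  · intro i _; rfl

theorem IsRep.equivIndex {A : LaurentSeries ℚ} {e : ι → ℤ} {c : ι → ℚ}
    (h : IsRep e c A) (E : κ ≃ ι) : IsRep (e ∘ E) (c ∘ E) A := by
  refine ⟨⟨h.lb.choose, fun i => h.lb.choose_spec (E i)⟩, ?_, ?_⟩
  · intro N
    have : {k | (e ∘ E) k = N} = E ⁻¹' {i | e i = N} := rfl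
    rw [this]
    exact (h.fin N).preimage (E.injective.injOn)
  · intro N hf
    rw [h.coeff_eq N (h.fin N)]
    apply Finset.sum_nbij' (i := fun i => E.symm i) (j := fun k => E k)
    · intro i hi
      simp only [Set.Finite.mem_toFinset, Set.mem_setOf_eq, Function.comp_apply,
        Equiv.apply_symm_apply] at hi ⊢
      exact hi
    · intro k hk
      simp only [Set.Finite.mem_toFinset, Set.mem_setOf_eq, Function.comp_apply] at hk ⊢
      exact hk
    · intro i _; simp
    · intro k _; simp
    · intro i _; simp

theorem isRep_one : IsRep (fun _ : Fin 0 → ι => (0 : ℤ)) (fun _ => (1 : ℚ))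
    (1 : LaurentSeries ℚ) := by
  refine ⟨⟨0, fun _ => le_refl 0⟩, fun N => Set.toFinite _, ?_⟩
  intro N hf
  rw [HahnSeries.coeff_one]
  by_cases hN : N = 0
  · subst hN
    rw [if_pos rfl]
    have hset : {v : Fin 0 → ι | (0:ℤ) = 0} = Set.univ := by
      ext v; simp
    have hcard : hf.toFinset.card = 1 := by
      rw [Set.Finite.card_toFinset]
      simp [hset]
    rw [Finset.sum_const, hcard, one_smul]
  · rw [if_neg hN]
    have hset : {v : Fin 0 → ι | (0:ℤ) = N} = ∅ := by
      ext v; simp; omega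
    have : hf.toFinset = ∅ := by
      ext v
      simp only [Set.Finite.mem_toFinset, Set.mem_setOf_eq, Finset.notMem_empty, iff_false]
      omega
    rw [this, Finset.sum_empty]

theorem IsRep.pow {A : LaurentSeries ℚ} {e : ι → ℤ} {c : ι → ℚ}
    (h : IsRep e c A) : ∀ n : ℕ, IsRep (fun v : Fin n → ι => ∑ i, e (v i))
      (fun v => ∏ i, c (v i)) (A ^ n) := by
  intro n
  induction n with
  | zero =>
    rw [pow_zero]
    exact isRep_one.congr (by funext v; simp) (by funext v; simp)
  | succ n ih =>
    rw [pow_succ]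
    have := (ih.mul h).equivIndex ((Fin.consEquiv (fun _ : Fin (n+1) => ι)).symm.trans (Equiv.prodComm _ _))
    apply this.congr
    · funext v
      simp only [Function.comp_apply, Equiv.trans_apply, Fin.consEquiv_symm_apply,
        Equiv.prodComm_apply, Prod.swap_prod_mk]
      rw [Fin.sum_univ_succ]
      exact add_comm _ _
    · funext v
      simp only [Function.comp_apply, Equiv.trans_apply, Fin.consEquiv_symm_apply,
        Equiv.prodComm_apply, Prod.swap_prod_mk]
      rw [Fin.prod_univ_succ]
      exact mul_comm _ _

theorem IsRep.single_mul {A : LaurentSeries ℚ} {e : ι → ℤ} {c : ι → ℚ} (σ : ℤ)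
    (h : IsRep e c A) : IsRep (fun i => σ + e i) c (HahnSeries.single σ (1 : ℚ) * A) := by
  obtain ⟨L, hL⟩ := h.lb
  refine ⟨⟨σ + L, fun i => by have := hL i; omega⟩, ?_, ?_⟩
  · intro N
    have : {i | σ + e i = N} = {i | e i = N - σ} := by ext i; simp; omega
    rw [this]; exact h.fin _
  · intro N hf
    have h1 : (HahnSeries.single σ (1:ℚ) * A).coeff ((N - σ) + σ) = 1 * A.coeff (N - σ) := by
      rw [HahnSeries.coeff_single_mul_add]
    rw [show N - σ + σ = N by ring] at h1
    rw [h1, one_mul, h.coeff_eq _ (h.fin (N - σ))]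
    apply Finset.sum_congr
    · ext i
      simp only [Set.Finite.mem_toFinset, Set.mem_setOf_eq]
      omega
    · intros; rfl

theorem quad_eq (r s n : ℤ) :
    r * (n * (n + 1) / 2) + s * (n * (n - 1) / 2) = (r + s) * tri n + r * n := by
  obtain ⟨c, hc⟩ := Int.even_mul_succ_self n
  obtain ⟨e, he⟩ := Int.even_mul_pred_self n
  have h2 := two_tri n
  have e3 : n * (n + 1) = n * (n - 1) + 2 * n := by ring
  have e1 : n * (n + 1) / 2 = c := by omega
  have e2 : n * (n - 1) / 2 = e := by omega
  have e4 : tri n = e := by omega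
  have e5 : c = e + n := by omega
  rw [e1, e2, e4, e5]; ring

theorem theta_fin {r s : ℤ} (hrs : 0 < r + s) (N : ℤ) :
    {n : ℤ | (r + s) * tri n + r * n = N}.Finite := by
  apply Set.Finite.subset (Set.finite_Icc (-(2*|N| + |r - s| + 2)) (2*|N| + |r - s| + 2))
  intro n hn
  simp only [Set.mem_setOf_eq] at hn
  have key : 2 * N = (r + s) * (n * n) + (r - s) * n := by
    have h2 := two_tri n; nlinarith [h2]
  have habs1 : N ≤ |N| := le_abs_self N
  have habs2 : -|N| ≤ N := neg_abs_le N
  have habs3 : r - s ≤ |r - s| := le_abs_self _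
  have habs4 : -|r - s| ≤ r - s := neg_abs_le _
  have habsN : 0 ≤ |N| := abs_nonneg N
  have habsA : 0 ≤ |r - s| := abs_nonneg _
  simp only [Set.mem_Icc]
  constructor
  · by_contra hlt
    push_neg at hlt
    -- n < -(2|N| + |r-s| + 2), set u = -n
    have hu : 2*|N| + |r - s| + 2 < -n := by omega
    have h1 : 0 ≤ (r + s - 1) * (n * n) := mul_nonneg (by omega) (mul_self_nonneg n)
    have h2 : 0 ≤ (|r - s| - (r - s)) * (-n) := mul_nonneg (by omega) (by omega)
    have h3 : 0 ≤ (-n) * (((-n) - |r - s|) - (2*|N| + 2)) := mul_nonneg (by omega) (by omega)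
    have h4 : 0 ≤ ((-n) - 1) * (2*|N| + 2) := mul_nonneg (by omega) (by omega)
    nlinarith [key, h1, h2, h3, h4]
  · by_contra hlt
    push_neg at hlt
    have hu : 2*|N| + |r - s| + 2 < n := by omega
    have h1 : 0 ≤ (r + s - 1) * (n * n) := mul_nonneg (by omega) (mul_self_nonneg n)
    have h2 : 0 ≤ ((r - s) + |r - s|) * n := mul_nonneg (by omega) (by omega)
    have h3 : 0 ≤ n * ((n - |r - s|) - (2*|N| + 2)) := mul_nonneg (by omega) (by omega)
    have h4 : 0 ≤ (n - 1) * (2*|N| + 2) := mul_nonneg (by omega) (by omega)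
    nlinarith [key, h1, h2, h3, h4]

theorem theta_lb {r s : ℤ} (hrs : 0 < r + s) (n : ℤ) :
    -(r - s)^2 ≤ (r + s) * tri n + r * n := by
  have h2 := two_tri n
  nlinarith [sq_nonneg (2*n + (r - s)), sq_nonneg (r - s),
    mul_nonneg (show (0:ℤ) ≤ r + s - 1 by omega) (mul_self_nonneg n)]

theorem theta_isRep {ε r s : ℤ} (hrs : 0 < r + s) :
    IsRep (fun n : ℤ => (r + s) * tri n + r * n) (fun n : ℤ => (ε : ℚ) ^ n) (theta ε r s) := by
  refine ⟨⟨-(r - s)^2, theta_lb hrs⟩, theta_fin hrs, ?_⟩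
  intro N hf
  have hcoeff : (theta ε r s).coeff N = thetaCoeff ε r s N := by
    rw [theta, dif_pos hrs]
  rw [hcoeff, thetaCoeff]
  have hrw : ∀ n : ℤ, (if r * (n * (n + 1) / 2) + s * (n * (n - 1) / 2) = N
        then (ε:ℚ)^n else 0)
      = (if (r + s) * tri n + r * n = N then (ε:ℚ)^n else 0) := by
    intro n; rw [quad_eq]
  rw [finsum_congr hrw]
  have hsupp : Function.support (fun n : ℤ => if (r + s) * tri n + r * n = N then (ε:ℚ)^n else 0)
      ⊆ (hf.toFinset : Set ℤ) := by
    intro n hn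
    simp only [Function.mem_support] at hn
    simp only [Set.Finite.coe_toFinset, Set.mem_setOf_eq]
    by_contra h0; rw [if_neg h0] at hn; exact hn rfl
  rw [finsum_eq_sum_of_support_subset _ hsupp]
  apply Finset.sum_congr rfl
  intro n hn
  rw [if_pos (by simpa using (Set.Finite.mem_toFinset hf).mp hn)]

theorem tri_flip4 (s n : ℤ) : tri (1 + 4*s - n) = tri n - 4*s*n + 2*s*(4*s+1) := by
  have key : 2 * tri (1 + 4*s - n) = 2 * (tri n - 4*s*n + 2*s*(4*s+1)) := by
    rw [two_tri]
    linear_combination (-1 : ℤ) * two_tri n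
  exact mul_left_cancel₀ two_ne_zero key

theorem tri_flip2 (s n : ℤ) : tri (1 + 2*s - n) = tri n - 2*s*n + s*(2*s+1) := by
  have key : 2 * tri (1 + 2*s - n) = 2 * (tri n - 2*s*n + s*(2*s+1)) := by
    rw [two_tri]
    linear_combination (-1 : ℤ) * two_tri n
  exact mul_left_cancel₀ two_ne_zero key

theorem prod_zpow_eq {α : Type*} (x : ℚ) (hx : x ≠ 0) (f : α → ℤ) (s : Finset α) :
    ∏ i ∈ s, x ^ f i = x ^ (∑ i ∈ s, f i) := by
  classical
  induction s using Finset.induction with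
  | empty => simp
  | insert _ _ h ih => rw [Finset.prod_insert h, Finset.sum_insert h, ih, zpow_add₀ hx]

theorem sign_zpow_congr {ε : ℤ} (hε : ε = 1 ∨ ε = -1) {x y : ℤ} (h : 2 ∣ x - y) :
    (ε:ℚ) ^ x = (ε:ℚ) ^ y := by
  obtain ⟨t, ht⟩ := h
  have hx : x = y + 2*t := by omega
  subst hx
  have hne : (ε:ℚ) ≠ 0 := by rcases hε with h1|h1 <;> simp [h1]
  have h2 : (ε:ℚ) ^ (2*t) = 1 := by
    rcases hε with h1 | h1 <;> subst h1
    · push_cast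
      rw [one_zpow]
    · push_cast
      exact Even.neg_one_zpow ⟨t, by ring⟩
  rw [zpow_add₀ hne, h2, mul_one]

theorem sum_flip4 {a : ℕ} (s : ℤ) (v : Fin a → ℤ) :
    ∑ i, tri (1 + 4*s - v i) = (∑ i, tri (v i)) - 4*s*(∑ i, v i) + (a:ℤ)*(2*s*(4*s+1)) := by
  rw [Finset.sum_congr rfl (fun i _ => tri_flip4 s (v i))]
  rw [Finset.sum_add_distrib, Finset.sum_sub_distrib, ← Finset.mul_sum, Finset.sum_const]
  simp [mul_comm]

theorem sum_flip2 {a : ℕ} (s : ℤ) (v : Fin a → ℤ) :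
    ∑ i, tri (1 + 2*s - v i) = (∑ i, tri (v i)) - 2*s*(∑ i, v i) + (a:ℤ)*(s*(2*s+1)) := by
  rw [Finset.sum_congr rfl (fun i _ => tri_flip2 s (v i))]
  rw [Finset.sum_add_distrib, Finset.sum_sub_distrib, ← Finset.mul_sum, Finset.sum_const]
  simp [mul_comm]

theorem sum_lin_flip {a : ℕ} (c : ℤ) (v : Fin a → ℤ) :
    ∑ i, (c - v i) = (a:ℤ)*c - (∑ i, v i) := by
  rw [Finset.sum_sub_distrib, Finset.sum_const]
  simp [mul_comm]

theorem main_aux (μ ℓ m k M σ : ℤ) (hμ : 1 ≤ μ) (hℓ : 0 ≤ ℓ) (hm : 0 ≤ m)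
    (hM : M = 4 * ℓ + 2 * m + 3) (hσ : σ = -(ℓ + m + 1) * k)
    (ε1 ε2 : ℤ) (hε1 : ε1 = 1 ∨ ε1 = -1) (hε2 : ε2 = 1 ∨ ε2 = -1)
    (hmul : ε1 * ε2 = -1) (hk : Int.gcd k M = 1) :
    huff M (HahnSeries.single σ (1 : ℚ)
      * theta ε1 k (μ * M - k) ^ (2 * ℓ + 1)
      * theta ε2 k (2 * μ * M - k) ^ (2 * m + 1)) = 0 := by
  have hM0 : 0 < M := by omega
  set a : ℕ := (2*ℓ+1).toNat with hadef
  set b : ℕ := (2*m+1).toNat with hbdef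
  have ha : (a:ℤ) = 2*ℓ+1 := Int.toNat_of_nonneg (by omega)
  have hb : (b:ℤ) = 2*m+1 := Int.toNat_of_nonneg (by omega)
  have hza : theta ε1 k (μ*M-k) ^ (2*ℓ+1 : ℤ) = theta ε1 k (μ*M-k) ^ (a:ℕ) := by
    rw [← ha, zpow_natCast]
  have hzb : theta ε2 k (2*μ*M-k) ^ (2*m+1 : ℤ) = theta ε2 k (2*μ*M-k) ^ (b:ℕ) := by
    rw [← hb, zpow_natCast]
  rw [hza, hzb]
  have hrs1 : 0 < k + (μ*M - k) := by nlinarith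
  have hrs2 : 0 < k + (2*μ*M - k) := by nlinarith
  have R1 : IsRep (fun n : ℤ => μ*M * tri n + k*n) (fun n : ℤ => (ε1:ℚ)^n)
      (theta ε1 k (μ*M - k)) :=
    (theta_isRep hrs1).congr (by funext n; ring) rfl
  have R2 : IsRep (fun n : ℤ => 2*(μ*M) * tri n + k*n) (fun n : ℤ => (ε2:ℚ)^n)
      (theta ε2 k (2*μ*M - k)) :=
    (theta_isRep hrs2).congr (by funext n; ring) rfl
  have RP := ((R1.pow a).single_mul σ).mul (R2.pow b)
  -- now prove huff vanishes
  have hcoeff0 : ∀ N : ℤ, M ∣ N → (HahnSeries.single σ (1 : ℚ)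
      * theta ε1 k (μ*M - k) ^ (a:ℕ) * theta ε2 k (2*μ*M - k) ^ (b:ℕ)).coeff N = 0 := by
    intro N hdvd
    rw [RP.coeff_eq N (RP.fin N)]
    set S := (RP.fin N).toFinset with hSdef
    have hmemS : ∀ p : (Fin a → ℤ) × (Fin b → ℤ), p ∈ S ↔
        (σ + ∑ i, (μ*M * tri (p.1 i) + k * (p.1 i)))
          + ∑ j, (2*(μ*M) * tri (p.2 j) + k * (p.2 j)) = N := by
      intro p
      rw [hSdef, Set.Finite.mem_toFinset]
      exact Iff.rfl
    -- the involution
    set g : (Fin a → ℤ) × (Fin b → ℤ) → (Fin a → ℤ) × (Fin b → ℤ) := fun p =>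
      (fun i => 1 + 4*(((∑ i, p.1 i) + (∑ j, p.2 j) - (ℓ + m + 1)) / M) - p.1 i,
       fun j => 1 + 2*(((∑ i, p.1 i) + (∑ j, p.2 j) - (ℓ + m + 1)) / M) - p.2 j) with hgdef
    -- basic facts for members
    have hsfact : ∀ p : (Fin a → ℤ) × (Fin b → ℤ), p ∈ S →
        M * (((∑ i, p.1 i) + (∑ j, p.2 j) - (ℓ + m + 1)) / M)
          = (∑ i, p.1 i) + (∑ j, p.2 j) - (ℓ + m + 1) := by
      rintro ⟨v, w⟩ hp
      rw [hmemS] at hp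
      apply Int.mul_ediv_cancel'
      have hsum1 : ∑ i, (μ*M * tri (v i) + k * (v i))
          = μ*M * (∑ i, tri (v i)) + k * (∑ i, v i) := by
        rw [Finset.sum_add_distrib, ← Finset.mul_sum, ← Finset.mul_sum]
      have hsum2 : ∑ j, (2*(μ*M) * tri (w j) + k * (w j))
          = 2*(μ*M) * (∑ j, tri (w j)) + k * (∑ j, w j) := by
        rw [Finset.sum_add_distrib, ← Finset.mul_sum, ← Finset.mul_sum]
      rw [hsum1, hsum2] at hp
      have hdvd2 : M ∣ k * ((∑ i, v i) + (∑ j, w j) - (ℓ + m + 1)) := by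
        obtain ⟨d, hd⟩ := hdvd
        exact ⟨d - μ * (∑ i, tri (v i)) - 2*μ*(∑ j, tri (w j)),
          by linear_combination hd + hp - hσ⟩
      have hcop : Int.gcd M k = 1 := by rwa [Int.gcd_comm]
      exact Int.dvd_of_dvd_mul_right_of_gcd_one hdvd2 hcop
    apply Finset.sum_involution (fun p _ => g p)
    · -- f p + f (g p) = 0
      rintro ⟨v, w⟩ hp
      set s : ℤ := ((∑ i, v i) + (∑ j, w j) - (ℓ + m + 1)) / M with hs_def
      have hs := hsfact (v, w) hp
      simp only [← hs_def] at hs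
      have hε1ne : (ε1:ℚ) ≠ 0 := by rcases hε1 with h|h <;> simp [h]
      have hε2ne : (ε2:ℚ) ≠ 0 := by rcases hε2 with h|h <;> simp [h]
      have hgv : (g (v, w)).1 = fun i => 1 + 4*s - v i := rfl
      have hgw : (g (v, w)).2 = fun j => 1 + 2*s - w j := rfl
      show ((∏ i, (ε1:ℚ)^(v i)) * ∏ j, (ε2:ℚ)^(w j))
        + ((∏ i, (ε1:ℚ)^((g (v,w)).1 i)) * ∏ j, (ε2:ℚ)^((g (v,w)).2 j)) = 0
      rw [hgv, hgw]
      rw [prod_zpow_eq _ hε1ne, prod_zpow_eq _ hε2ne, prod_zpow_eq _ hε1ne,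
        prod_zpow_eq _ hε2ne]
      rw [sum_lin_flip (1 + 4*s) v, sum_lin_flip (1 + 2*s) w]
      have hpar1 : (ε1:ℚ) ^ ((a:ℤ)*(1+4*s) - (∑ i, v i)) = (ε1:ℚ) ^ ((∑ i, v i) + 1) :=
        sign_zpow_congr hε1 ⟨ℓ + 2*(a:ℤ)*s - (∑ i, v i), by linear_combination ha⟩
      have hpar2 : (ε2:ℚ) ^ ((b:ℤ)*(1+2*s) - (∑ j, w j)) = (ε2:ℚ) ^ ((∑ j, w j) + 1) :=
        sign_zpow_congr hε2 ⟨m + (b:ℤ)*s - (∑ j, w j), by linear_combination hb⟩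
      rw [hpar1, hpar2, zpow_add_one₀ hε1ne, zpow_add_one₀ hε2ne]
      have hmulQ : (ε1:ℚ) * (ε2:ℚ) = -1 := by exact_mod_cast congrArg (Int.cast : ℤ → ℚ) hmul
      linear_combination ((ε1:ℚ) ^ (∑ i, v i) * (ε2:ℚ) ^ (∑ j, w j)) * hmulQ
    · -- g p ≠ p when f p ≠ 0
      rintro ⟨v, w⟩ hp hf
      set s : ℤ := ((∑ i, v i) + (∑ j, w j) - (ℓ + m + 1)) / M with hs_def
      intro heq
      have ha0 : 0 < a := by omega
      have h0 : (g (v, w)).1 ⟨0, ha0⟩ = v ⟨0, ha0⟩ := by rw [heq]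
      have : 1 + 4*s - v ⟨0, ha0⟩ = v ⟨0, ha0⟩ := h0
      omega
    · -- g p ∈ S
      rintro ⟨v, w⟩ hp
      set s : ℤ := ((∑ i, v i) + (∑ j, w j) - (ℓ + m + 1)) / M with hs_def
      have hs := hsfact (v, w) hp
      simp only [← hs_def] at hs
      rw [hmemS] at hp ⊢
      have hgv : (g (v, w)).1 = fun i => 1 + 4*s - v i := rfl
      have hgw : (g (v, w)).2 = fun j => 1 + 2*s - w j := rfl
      rw [hgv, hgw]
      have hsum1 : ∑ i, (μ*M * tri (1 + 4*s - v i) + k * (1 + 4*s - v i))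
          = μ*M * ((∑ i, tri (v i)) - 4*s*(∑ i, v i) + (a:ℤ)*(2*s*(4*s+1)))
            + k * ((a:ℤ)*(1+4*s) - (∑ i, v i)) := by
        rw [Finset.sum_add_distrib, ← Finset.mul_sum, ← Finset.mul_sum,
          sum_flip4, sum_lin_flip]
      have hsum2 : ∑ j, (2*(μ*M) * tri (1 + 2*s - w j) + k * (1 + 2*s - w j))
          = 2*(μ*M) * ((∑ j, tri (w j)) - 2*s*(∑ j, w j) + (b:ℤ)*(s*(2*s+1)))
            + k * ((b:ℤ)*(1+2*s) - (∑ j, w j)) := by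
        rw [Finset.sum_add_distrib, ← Finset.mul_sum, ← Finset.mul_sum,
          sum_flip2, sum_lin_flip]
      rw [hsum1, hsum2]
      have hsum1' : ∑ i, (μ*M * tri (v i) + k * (v i))
          = μ*M * (∑ i, tri (v i)) + k * (∑ i, v i) := by
        rw [Finset.sum_add_distrib, ← Finset.mul_sum, ← Finset.mul_sum]
      have hsum2' : ∑ j, (2*(μ*M) * tri (w j) + k * (w j))
          = 2*(μ*M) * (∑ j, tri (w j)) + k * (∑ j, w j) := by
        rw [Finset.sum_add_distrib, ← Finset.mul_sum, ← Finset.mul_sum]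
      rw [hsum1', hsum2'] at hp
      rw [ha, hb]
      linear_combination hp + (4*μ*M*s + 2*k) * hs - (4*μ*M*s^2 + 2*k*s) * hM
    · -- g (g p) = p
      rintro ⟨v, w⟩ hp
      set s : ℤ := ((∑ i, v i) + (∑ j, w j) - (ℓ + m + 1)) / M with hs_def
      have hs := hsfact (v, w) hp
      simp only [← hs_def] at hs
      have hgv : (g (v, w)).1 = fun i => 1 + 4*s - v i := rfl
      have hgw : (g (v, w)).2 = fun j => 1 + 2*s - w j := rfl
      have hs' : ((∑ i, (g (v,w)).1 i) + (∑ j, (g (v,w)).2 j) - (ℓ + m + 1)) / M = s := by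
        rw [hgv, hgw, sum_lin_flip, sum_lin_flip]
        have harith : (a:ℤ)*(1+4*s) - (∑ i, v i) + ((b:ℤ)*(1+2*s) - (∑ j, w j)) - (ℓ+m+1)
            = M * s := by
          rw [ha, hb]
          linear_combination hs - 2*s*hM
        rw [harith]
        exact Int.mul_ediv_cancel_left s (by omega)
      show (fun i => 1 + 4*((((∑ i, (g (v,w)).1 i) + (∑ j, (g (v,w)).2 j) - (ℓ + m + 1)) / M))
          - (g (v,w)).1 i,
        fun j => 1 + 2*((((∑ i, (g (v,w)).1 i) + (∑ j, (g (v,w)).2 j) - (ℓ + m + 1)) / M))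
          - (g (v,w)).2 j) = (v, w)
      rw [hs']
      refine Prod.ext ?_ ?_
      · funext i
        show 1 + 4*s - (g (v,w)).1 i = v i
        rw [hgv]; ring
      · funext j
        show 1 + 2*s - (g (v,w)).2 j = w j
        rw [hgw]; ring
  ext N
  rw [HahnSeries.coeff_zero]
  show (if M ∣ N then (HahnSeries.single σ (1:ℚ) * theta ε1 k (μ*M - k) ^ (a:ℕ)
      * theta ε2 k (2*μ*M - k) ^ (b:ℕ)).coeff N else 0) = 0
  split_ifs with hdN
  · exact hcoeff0 N hdN
  · rfl

/-- **Theorem (Type I.3, eq. (1.9))**: with `M = 4ℓ + 2m + 3` and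
`σ = -(ℓ + m + 1)k`, for `(κ, λ) ∈ {(0,1), (1,0)}` and `gcd(k, M) = 1`,
`H_M(q^σ · f((-1)^κ q^k, (-1)^κ q^{μM-k})^{2ℓ+1} ·
  f((-1)^λ q^k, (-1)^λ q^{2μM-k})^{2m+1}) = 0`. -/
theorem statement5 (μ ℓ m k M σ : ℤ) (hμ : 1 ≤ μ) (hℓ : 0 ≤ ℓ) (hm : 0 ≤ m)
    (hM : M = 4 * ℓ + 2 * m + 3) (hσ : σ = -(ℓ + m + 1) * k)
    (κ lam : ℕ) (hκlam : (κ = 0 ∧ lam = 1) ∨ (κ = 1 ∧ lam = 0))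
    (hk : Int.gcd k M = 1) :
    huff M (HahnSeries.single σ (1 : ℚ)
      * theta ((-1) ^ κ) k (μ * M - k) ^ (2 * ℓ + 1)
      * theta ((-1) ^ lam) k (2 * μ * M - k) ^ (2 * m + 1)) = 0 := by
  rcases hκlam with ⟨h1, h2⟩ | ⟨h1, h2⟩ <;> subst h1 <;> subst h2 <;>
    [skip; skip] <;> simp only [pow_zero, pow_one]
  · exact main_aux μ ℓ m k M σ hμ hℓ hm hM hσ 1 (-1) (Or.inl rfl) (Or.inr rfl)
      (by ring) hk
  · exact main_aux μ ℓ m k M σ hμ hℓ hm hM hσ (-1) 1 (Or.inr rfl) (Or.inl rfl)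
      (by ring) hk

end ThetaVanish
end
end

section
/- Let μ ≥ 1, ℓ ≥ 0, m ≥ 0 be integers, set M = 2ℓ + 16m + 9 and σ = −(2ℓ + 12m + 7)·k. Then for every pair (κ, λ) ∈ {(0,1), (1,1)} and every integer k with gcd(k, M) = 1, one has H_M( q^σ · f((−1)^κ q^k, (−1)^κ q^{μM−k})^{2ℓ+1} · f((−1)^λ q^{4k}, (−1)^λ q^{2μM−4k})^{2m+1} ) = 0. -/
/-!
Common setup: Ramanujan theta series as formal Laurent series over `ℚ`
(`LaurentSeries ℚ = HahnSeries ℤ ℚ`), and the huffing operator `H_M`.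
-/

noncomputable section

open scoped Classical

namespace ThetaVanish

/-! ### Auxiliary development for the proof -/

open HahnSeries

lemma two_half_succ (n : ℤ) : 2 * (n * (n + 1) / 2) = n * (n + 1) := by
  obtain ⟨c, hc⟩ := Int.even_mul_succ_self n
  rw [hc]; omega

lemma two_half_pred (n : ℤ) : 2 * (n * (n - 1) / 2) = n * (n - 1) := by
  obtain ⟨c, hc⟩ := Int.even_mul_pred_self n
  rw [hc]; omega

/-- The exponent of the `n`-th term of `f(ε q^r, ε q^s)`. -/
def expE (r s n : ℤ) : ℤ := r * (n * (n + 1) / 2) + s * (n * (n - 1) / 2)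

lemma two_expE (r s n : ℤ) : 2 * expE r s n = r * (n * (n + 1)) + s * (n * (n - 1)) := by
  simp only [expE]
  linear_combination r * two_half_succ n + s * two_half_pred n

lemma expE_lower (r s : ℤ) (h : 0 < r + s) (n : ℤ) : -(r - s) ^ 2 ≤ expE r s n := by
  have h2 := two_expE r s n
  nlinarith [sq_nonneg (2 * n + r - s), sq_nonneg (r - s),
    mul_nonneg (show (0:ℤ) ≤ r + s - 1 by omega) (sq_nonneg n)]

lemma expE_fiber (r s : ℤ) (h : 0 < r + s) (g : ℤ) : {n : ℤ | expE r s n = g}.Finite := by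
  apply Set.Finite.subset (Set.finite_Icc (-(2*|g| + (r-s)^2 + 2)) (2*|g| + (r-s)^2 + 2))
  intro n hn
  simp only [Set.mem_setOf_eq] at hn
  have h2 := two_expE r s n
  rw [hn] at h2
  simp only [Set.mem_Icc]
  constructor
  · nlinarith [le_abs_self g, neg_abs_le g, abs_nonneg g, sq_nonneg (r-s), sq_nonneg (n+1),
      sq_nonneg (2*n + r - s), mul_nonneg (show (0:ℤ) ≤ r + s - 1 by omega) (sq_nonneg n),
      sq_nonneg (n + 2*|g| + (r-s)^2 + 2)]
  · nlinarith [le_abs_self g, neg_abs_le g, abs_nonneg g, sq_nonneg (r-s), sq_nonneg (n-1),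
      sq_nonneg (2*n + r - s), mul_nonneg (show (0:ℤ) ≤ r + s - 1 by omega) (sq_nonneg n),
      sq_nonneg (n - (2*|g| + (r-s)^2 + 2))]

lemma expE1_form (k μ M n : ℤ) : expE k (μ*M - k) n = μ*M*(n*(n-1)/2) + k*n := by
  have h := two_expE k (μ*M - k) n
  have h2 := two_half_pred n
  have h3 : n*(n+1) = n*(n-1) + 2*n := by ring
  have hD : 2 * expE k (μ*M - k) n = 2*(μ*M*(n*(n-1)/2) + k*n) := by
    linear_combination h - μ*M*h2 - k*h3
  linarith

lemma expE2_form (k μ M n : ℤ) : expE (4*k) (2*μ*M - 4*k) n = 2*μ*M*(n*(n-1)/2) + 4*k*n := by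
  have h := two_expE (4*k) (2*μ*M - 4*k) n
  have h2 := two_half_pred n
  have h3 : n*(n+1) = n*(n-1) + 2*n := by ring
  have hD : 2 * expE (4*k) (2*μ*M - 4*k) n = 2*(2*μ*M*(n*(n-1)/2) + 4*k*n) := by
    linear_combination h - 2*μ*M*h2 - 4*k*h3
  linarith

lemma sum_const_sub {p : ℕ} (α : ℤ) (v : Fin p → ℤ) :
    ∑ i, (α - v i) = (p:ℤ) * α - ∑ i, v i := by
  rw [Finset.sum_sub_distrib, Finset.sum_const, Finset.card_univ, Fintype.card_fin,
    nsmul_eq_mul]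

lemma sum_expE1_shift (k μ M c : ℤ) {p : ℕ} (v : Fin p → ℤ) :
    2 * ∑ i, expE k (μ*M - k) (c + 1 - v i)
      = 2 * ∑ i, expE k (μ*M - k) (v i)
        + ((p:ℤ) * (μ*M*(c^2+c) + 2*k*(c+1)) - (2*(μ*M)*c + 4*k) * ∑ i, v i) := by
  rw [Finset.mul_sum, Finset.mul_sum]
  rw [show (∑ i, 2 * expE k (μ*M - k) (c + 1 - v i))
      = ∑ i, (2 * expE k (μ*M - k) (v i)
          + ((μ*M*(c^2+c) + 2*k*(c+1)) - (2*(μ*M)*c + 4*k) * v i)) from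
    Finset.sum_congr rfl fun i _ => by
      linear_combination two_expE k (μ*M - k) (c + 1 - v i) - two_expE k (μ*M - k) (v i)]
  rw [Finset.sum_add_distrib, Finset.sum_sub_distrib, Finset.sum_const, Finset.card_univ,
    Fintype.card_fin, nsmul_eq_mul]
  simp only [← Finset.mul_sum]

lemma sum_expE2_shift (k μ M c : ℤ) {p : ℕ} (v : Fin p → ℤ) :
    2 * ∑ i, expE (4*k) (2*μ*M - 4*k) (2*c + 1 - v i)
      = 2 * ∑ i, expE (4*k) (2*μ*M - 4*k) (v i)
        + ((p:ℤ) * (2*μ*M*(4*c^2+2*c) + 8*k*(2*c+1)) - (8*(μ*M)*c + 16*k) * ∑ i, v i) := by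
  rw [Finset.mul_sum, Finset.mul_sum]
  rw [show (∑ i, 2 * expE (4*k) (2*μ*M - 4*k) (2*c + 1 - v i))
      = ∑ i, (2 * expE (4*k) (2*μ*M - 4*k) (v i)
          + ((2*μ*M*(4*c^2+2*c) + 8*k*(2*c+1)) - (8*(μ*M)*c + 16*k) * v i)) from
    Finset.sum_congr rfl fun i _ => by
      linear_combination two_expE (4*k) (2*μ*M - 4*k) (2*c + 1 - v i)
        - two_expE (4*k) (2*μ*M - 4*k) (v i)]
  rw [Finset.sum_add_distrib, Finset.sum_sub_distrib, Finset.sum_const, Finset.card_univ,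
    Fintype.card_fin, nsmul_eq_mul]
  simp only [← Finset.mul_sum]

lemma prod_neg_one_zpow : ∀ (p : ℕ) (v : Fin p → ℤ),
    (∏ i, (-1:ℚ) ^ (v i)) = (-1:ℚ) ^ (∑ i, v i)
  | 0, v => by simp
  | p+1, v => by
    rw [Fin.prod_univ_succ, Fin.sum_univ_succ, prod_neg_one_zpow p (fun i => v i.succ),
      zpow_add₀ (by norm_num : (-1:ℚ) ≠ 0)]

lemma neg_one_zpow_odd_shift (a b j : ℤ) (h : b = a + (2*j+1)) :
    (-1:ℚ) ^ b = -(-1:ℚ) ^ a := by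
  subst h
  rw [zpow_add₀ (by norm_num : (-1:ℚ) ≠ 0),
    Odd.neg_one_zpow (n := 2*j+1) ⟨j, by ring⟩, mul_neg_one]

lemma finsum_zero_of_involution {α : Type} (f : α → ℚ) (ψ : α → α)
    (hinv : Function.Involutive ψ) (hf : ∀ x, f (ψ x) = -f x) : ∑ᶠ x, f x = 0 := by
  have h1 : ∑ᶠ x, f (ψ x) = ∑ᶠ x, f x :=
    finsum_eq_of_bijective ψ hinv.bijective fun x => rfl
  have h2 : ∑ᶠ x, f (ψ x) = ∑ᶠ x, -f x := finsum_congr hf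
  have h3 : ∑ᶠ x, -f x = -∑ᶠ x, f x := by
    simpa using finsum_neg_distrib f
  linarith

/-- The summable family of monomials of a theta series. -/
def thetaFam (ε r s : ℤ) (h : 0 < r + s) : SummableFamily ℤ ℚ ℤ where
  toFun n := HahnSeries.single (expE r s n) ((ε : ℚ) ^ n)
  isPWO_iUnion_support' := by
    apply isPWO_of_subset_Ici (a := -(r - s) ^ 2)
    intro g hg
    simp only [Set.mem_iUnion] at hg
    obtain ⟨n, hn⟩ := hg
    have h2 := HahnSeries.support_single_subset hn
    rw [Set.mem_singleton_iff] at h2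
    rw [h2]
    exact expE_lower r s h n
  finite_co_support' g := by
    apply (expE_fiber r s h g).subset
    intro n hn
    simp only [Set.mem_setOf_eq] at hn ⊢
    by_contra hne
    exact hn (HahnSeries.coeff_single_of_ne fun hg => hne hg.symm)

lemma thetaFam_hsum (ε r s : ℤ) (h : 0 < r + s) :
    (thetaFam ε r s h).hsum = theta ε r s := by
  rw [theta, dif_pos h]
  ext g
  rw [SummableFamily.coeff_hsum]
  show (∑ᶠ n : ℤ, (HahnSeries.single (expE r s n) ((ε : ℚ) ^ n)).coeff g) = thetaCoeff ε r s g
  unfold thetaCoeff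
  apply finsum_congr
  intro n
  rw [HahnSeries.coeff_single]
  by_cases hc : g = expE r s n
  · rw [if_pos hc, if_pos (show r * (n * (n + 1) / 2) + s * (n * (n - 1) / 2) = g from hc.symm)]
  · rw [if_neg hc, if_neg (show ¬(r * (n * (n + 1) / 2) + s * (n * (n - 1) / 2) = g) from
      fun hh => hc hh.symm)]

def consEquiv (p : ℕ) : (ℤ × (Fin p → ℤ)) ≃ (Fin (p+1) → ℤ) where
  toFun x := Fin.cons x.1 x.2
  invFun v := (v 0, Fin.tail v)
  left_inv x := by simp
  right_inv v := Fin.cons_self_tail v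

def powFam (F : HahnSeries.SummableFamily ℤ ℚ ℤ) :
    (p : ℕ) → HahnSeries.SummableFamily ℤ ℚ (Fin p → ℤ)
  | 0 => SummableFamily.Equiv (Equiv.ofUnique Unit (Fin 0 → ℤ)) (SummableFamily.const Unit 1)
  | p + 1 => SummableFamily.Equiv (consEquiv p) (SummableFamily.smul F (powFam F p))

lemma powFam_hsum (F : HahnSeries.SummableFamily ℤ ℚ ℤ) :
    ∀ p : ℕ, (powFam F p).hsum = F.hsum ^ p
  | 0 => by simp [powFam]
  | p + 1 => by
    rw [powFam, SummableFamily.hsum_equiv, SummableFamily.smul_hsum,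
      HahnSeries.of_symm_smul_of_eq_mul, powFam_hsum F p, pow_succ']

lemma powFam_apply (F : HahnSeries.SummableFamily ℤ ℚ ℤ) (a : ℤ → ℤ) (c : ℤ → ℚ)
    (hF : ∀ n, F n = HahnSeries.single (a n) (c n)) :
    ∀ (p : ℕ) (v : Fin p → ℤ),
      powFam F p v = HahnSeries.single (∑ i, a (v i)) (∏ i, c (v i))
  | 0, v => by
    simp only [powFam, Finset.univ_eq_empty, Finset.sum_empty, Finset.prod_empty]
    show (1 : HahnSeries ℤ ℚ) = _
    rw [← HahnSeries.single_zero_one]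
  | p + 1, v => by
    have h0 : powFam F (p+1) v = F (v 0) * powFam F p (Fin.tail v) := rfl
    rw [h0, hF, powFam_apply F a c hF p (Fin.tail v), HahnSeries.single_mul_single,
      Fin.sum_univ_succ, Fin.prod_univ_succ]
    rfl

theorem aux_vanish (μ ℓ m k M σ N : ℤ) (A B : ℕ) (ε1 ε2 : ℤ)
    (hm : 0 ≤ m)
    (hM : M = 2*ℓ + 16*m + 9) (hσ : σ = -(2*ℓ + 12*m + 7)*k)
    (hA : (A:ℤ) = 2*ℓ + 1) (hB : (B:ℤ) = 2*m + 1)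
    (hk : Int.gcd k M = 1) (hN : M ∣ N)
    (hε : (ε1 = 1 ∧ ε2 = -1) ∨ (ε1 = -1 ∧ ε2 = -1)) :
    ∑ᶠ x : (Fin A → ℤ) × (Fin B → ℤ),
      (if N = σ + ((∑ i, expE k (μ*M - k) (x.1 i))
            + ∑ j, expE (4*k) (2*μ*M - 4*k) (x.2 j))
       then (∏ i, (ε1:ℚ) ^ (x.1 i)) * ∏ j, (ε2:ℚ) ^ (x.2 j) else 0) = 0 := by
  have hM0 : (0:ℤ) < M := by
    have : (0:ℤ) ≤ (A:ℤ) := Int.natCast_nonneg A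
    omega
  set Ex : (Fin A → ℤ) × (Fin B → ℤ) → ℤ := fun x =>
    σ + ((∑ i, expE k (μ*M - k) (x.1 i)) + ∑ j, expE (4*k) (2*μ*M - 4*k) (x.2 j)) with hEx
  set Sgn : (Fin A → ℤ) × (Fin B → ℤ) → ℚ := fun x =>
    (∏ i, (ε1:ℚ) ^ (x.1 i)) * ∏ j, (ε2:ℚ) ^ (x.2 j) with hSgn
  set cc : (Fin A → ℤ) × (Fin B → ℤ) → ℤ := fun x =>
    (2*((∑ i, x.1 i) + 4*∑ j, x.2 j) - (2*ℓ+1) - 4*(2*m+1)) / M with hcc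
  set map : (Fin A → ℤ) × (Fin B → ℤ) → (Fin A → ℤ) × (Fin B → ℤ) := fun x =>
    (fun i => cc x + 1 - x.1 i, fun j => 2*cc x + 1 - x.2 j) with hmap
  set ψ : (Fin A → ℤ) × (Fin B → ℤ) → (Fin A → ℤ) × (Fin B → ℤ) := fun x =>
    if N = Ex x then map x else x with hψ
  -- Step 1: divisibility gives the exact quotient
  have hccval : ∀ x : (Fin A → ℤ) × (Fin B → ℤ), N = Ex x → ∃ d : ℤ,
      cc x = 1 + 2*d ∧
      2*((∑ i, x.1 i) + 4*∑ j, x.2 j) - (2*ℓ+1) - 4*(2*m+1) = M * cc x := by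
    intro x hx
    have h1 : (∑ i, expE k (μ*M - k) (x.1 i))
        = μ*M*(∑ i, (x.1 i)*((x.1 i) - 1)/2) + k*(∑ i, x.1 i) := by
      rw [Finset.mul_sum, Finset.mul_sum, ← Finset.sum_add_distrib]
      exact Finset.sum_congr rfl fun i _ => expE1_form k μ M (x.1 i)
    have h2 : (∑ j, expE (4*k) (2*μ*M - 4*k) (x.2 j))
        = 2*μ*M*(∑ j, (x.2 j)*((x.2 j) - 1)/2) + 4*k*(∑ j, x.2 j) := by
      rw [Finset.mul_sum, Finset.mul_sum, ← Finset.sum_add_distrib]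
      exact Finset.sum_congr rfl fun j _ => expE2_form k μ M (x.2 j)
    obtain ⟨t, ht⟩ := hN
    have hx' := hx
    rw [hEx] at hx'
    simp only at hx'
    rw [h1, h2] at hx'
    have hdvd2 : M ∣ (((∑ i, x.1 i) + 4*∑ j, x.2 j) - (2*ℓ+12*m+7)) * k :=
      ⟨t - (μ*(∑ i, (x.1 i)*((x.1 i) - 1)/2) + 2*μ*(∑ j, (x.2 j)*((x.2 j) - 1)/2)),
        by linear_combination ht - hx' - hσ⟩
    have hco : IsCoprime (M:ℤ) k := by
      rw [Int.isCoprime_iff_gcd_eq_one, Int.gcd_comm]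
      exact hk
    obtain ⟨d, hd⟩ := hco.dvd_of_dvd_mul_right hdvd2
    have hnum : 2*((∑ i, x.1 i) + 4*∑ j, x.2 j) - (2*ℓ+1) - 4*(2*m+1) = M*(1+2*d) := by
      linear_combination 2*hd - hM
    have hcv : cc x = 1 + 2*d := by
      rw [hcc]
      simp only
      rw [hnum, Int.mul_ediv_cancel_left _ (ne_of_gt hM0)]
    exact ⟨d, hcv, by rw [hcv]; exact hnum⟩
  -- Step 2: exponent invariance
  have hExmap : ∀ x, N = Ex x → Ex (map x) = Ex x := by
    intro x hx
    obtain ⟨d, hcd, hMc⟩ := hccval x hx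
    have d1 := sum_expE1_shift k μ M (cc x) x.1
    have d2 := sum_expE2_shift k μ M (cc x) x.2
    rw [hA] at d1
    rw [hB] at d2
    rw [hEx, hmap]
    simp only
    have key : 2 * ((∑ i, expE k (μ*M - k) (cc x + 1 - x.1 i))
          + ∑ j, expE (4*k) (2*μ*M - 4*k) (2*cc x + 1 - x.2 j))
        = 2 * ((∑ i, expE k (μ*M - k) (x.1 i))
          + ∑ j, expE (4*k) (2*μ*M - 4*k) (x.2 j)) := by
      linear_combination d1 + d2 - (μ*M*(cc x) + 2*k)*hMc - ((μ*M*(cc x) + 2*k)*(cc x))*hM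
    linarith
  have hcondmap : ∀ x, N = Ex x → N = Ex (map x) := fun x hx => by
    rw [hExmap x hx]; exact hx
  -- Step 3: cc is preserved by map
  have hccmap : ∀ x, N = Ex x → cc (map x) = cc x := by
    intro x hx
    obtain ⟨d, hcd, hMc⟩ := hccval x hx
    have hnum' : 2*((∑ i, (map x).1 i) + 4*∑ j, (map x).2 j) - (2*ℓ+1) - 4*(2*m+1)
        = M * cc x := by
      rw [hmap]
      simp only
      rw [sum_const_sub (cc x + 1) x.1, sum_const_sub (2*cc x + 1) x.2, hA, hB]
      linear_combination -hMc - 2*(cc x)*hM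
    have hrfl : cc (map x)
        = (2*((∑ i, (map x).1 i) + 4*∑ j, (map x).2 j) - (2*ℓ+1) - 4*(2*m+1)) / M := rfl
    rw [hrfl, hnum', Int.mul_ediv_cancel_left _ (ne_of_gt hM0)]
  -- Step 4: sign flip
  have hSgnmap : ∀ x, N = Ex x → Sgn (map x) = -Sgn x := by
    intro x hx
    obtain ⟨d, hcd, hMc⟩ := hccval x hx
    rw [hSgn, hmap]
    simp only
    rcases hε with ⟨he1, he2⟩ | ⟨he1, he2⟩
    · simp only [he1, he2, Int.cast_one, Int.cast_neg, one_zpow, Finset.prod_const_one, one_mul]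
      rw [prod_neg_one_zpow, prod_neg_one_zpow, sum_const_sub (2*cc x + 1) x.2, hB]
      exact neg_one_zpow_odd_shift _ _ ((2*m+1)*(2*d+1) + m - ∑ j, x.2 j) (by rw [hcd]; ring)
    · simp only [he1, he2, Int.cast_one, Int.cast_neg]
      rw [prod_neg_one_zpow, prod_neg_one_zpow, prod_neg_one_zpow, prod_neg_one_zpow,
        ← zpow_add₀ (by norm_num : (-1:ℚ) ≠ 0), ← zpow_add₀ (by norm_num : (-1:ℚ) ≠ 0),
        sum_const_sub (cc x + 1) x.1, sum_const_sub (2*cc x + 1) x.2, hA, hB]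
      exact neg_one_zpow_odd_shift _ _
        ((2*ℓ+1)*(d+1) + (2*m+1)*(2*d+1) + m - (∑ i, x.1 i) - ∑ j, x.2 j) (by rw [hcd]; ring)
  -- Step 5: the involution
  have hinv : Function.Involutive ψ := by
    intro x
    by_cases hx : N = Ex x
    · have h1 : ψ x = map x := by rw [hψ]; simp only; rw [if_pos hx]
      have h2 : ψ (map x) = map (map x) := by rw [hψ]; simp only; rw [if_pos (hcondmap x hx)]
      rw [h1, h2]
      have hc := hccmap x hx
      obtain ⟨v, w⟩ := x
      rw [hmap]
      simp only at hc ⊢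
      rw [hc]
      refine Prod.ext ?_ ?_ <;> funext i <;> simp
    · have h1 : ψ x = x := by rw [hψ]; simp only; rw [if_neg hx]
      rw [h1, h1]
  -- Step 6: conclude
  show ∑ᶠ x : (Fin A → ℤ) × (Fin B → ℤ), (if N = Ex x then Sgn x else 0) = 0
  apply finsum_zero_of_involution _ ψ hinv
  intro x
  by_cases hx : N = Ex x
  · have h1 : ψ x = map x := by rw [hψ]; simp only; rw [if_pos hx]
    rw [h1, if_pos (hcondmap x hx), if_pos hx]
    exact hSgnmap x hx
  · have h1 : ψ x = x := by rw [hψ]; simp only; rw [if_neg hx]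
    rw [h1, if_neg hx, neg_zero]

/-- **Theorem (Type I.3, eq. (1.10))**: with `M = 2ℓ + 16m + 9` and
`σ = -(2ℓ + 12m + 7)k`, for `(κ, λ) ∈ {(0,1), (1,1)}` and `gcd(k, M) = 1`,
`H_M(q^σ · f((-1)^κ q^k, (-1)^κ q^{μM-k})^{2ℓ+1} ·
  f((-1)^λ q^{4k}, (-1)^λ q^{2μM-4k})^{2m+1}) = 0`. -/
theorem statement6 (μ ℓ m k M σ : ℤ) (hμ : 1 ≤ μ) (hℓ : 0 ≤ ℓ) (hm : 0 ≤ m)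
    (hM : M = 2 * ℓ + 16 * m + 9) (hσ : σ = -(2 * ℓ + 12 * m + 7) * k)
    (κ lam : ℕ) (hκlam : (κ = 0 ∧ lam = 1) ∨ (κ = 1 ∧ lam = 1))
    (hk : Int.gcd k M = 1) :
    huff M (HahnSeries.single σ (1 : ℚ)
      * theta ((-1) ^ κ) k (μ * M - k) ^ (2 * ℓ + 1)
      * theta ((-1) ^ lam) (4 * k) (2 * μ * M - 4 * k) ^ (2 * m + 1)) = 0 := by
  have hM0 : (0:ℤ) < M := by omega
  have hμM : 0 < μ * M := mul_pos (by omega) hM0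
  have h1 : 0 < k + (μ * M - k) := by linarith
  have h2 : 0 < 4 * k + (2 * μ * M - 4 * k) := by linarith
  set ε1 : ℤ := (-1)^κ with hε1def
  set ε2 : ℤ := (-1)^lam with hε2def
  set A : ℕ := (2*ℓ+1).toNat with hAdef
  set B : ℕ := (2*m+1).toNat with hBdef
  have hA : (A:ℤ) = 2*ℓ+1 := Int.toNat_of_nonneg (by omega)
  have hB : (B:ℤ) = 2*m+1 := Int.toNat_of_nonneg (by omega)
  have hε : (ε1 = 1 ∧ ε2 = -1) ∨ (ε1 = -1 ∧ ε2 = -1) := by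
    rcases hκlam with ⟨h1', h2'⟩ | ⟨h1', h2'⟩
    · left; constructor <;> simp [hε1def, hε2def, h1', h2']
    · right; constructor <;> simp [hε1def, hε2def, h1', h2']
  have hzp1 : theta ε1 k (μ * M - k) ^ (2 * ℓ + 1) = theta ε1 k (μ * M - k) ^ (A:ℕ) := by
    rw [← hA, zpow_natCast]
  have hzp2 : theta ε2 (4 * k) (2 * μ * M - 4 * k) ^ (2 * m + 1)
      = theta ε2 (4 * k) (2 * μ * M - 4 * k) ^ (B:ℕ) := by
    rw [← hB, zpow_natCast]
  rw [hzp1, hzp2]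
  have hPsum : ((HahnSeries.single σ (1:ℚ)) •
      (SummableFamily.smul (powFam (thetaFam ε1 k (μ*M - k) h1) A)
        (powFam (thetaFam ε2 (4*k) (2*μ*M - 4*k) h2) B))).hsum
      = HahnSeries.single σ (1:ℚ) * theta ε1 k (μ * M - k) ^ (A:ℕ)
        * theta ε2 (4 * k) (2 * μ * M - 4 * k) ^ (B:ℕ) := by
    rw [SummableFamily.hsum_smul, SummableFamily.smul_hsum,
      HahnSeries.of_symm_smul_of_eq_mul, powFam_hsum, powFam_hsum, thetaFam_hsum, thetaFam_hsum]
    ring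
  rw [← hPsum]
  ext N
  have hcoeffN : ∀ (G : LaurentSeries ℚ) (N : ℤ), (huff M G).coeff N
      = if M ∣ N then G.coeff N else 0 := fun G N => rfl
  rw [hcoeffN, HahnSeries.coeff_zero]
  by_cases hdvd : M ∣ N
  swap
  · rw [if_neg hdvd]
  rw [if_pos hdvd, SummableFamily.coeff_hsum]
  have hPx : ∀ x : (Fin A → ℤ) × (Fin B → ℤ),
      (((HahnSeries.single σ (1:ℚ)) •
        (SummableFamily.smul (powFam (thetaFam ε1 k (μ*M - k) h1) A)
          (powFam (thetaFam ε2 (4*k) (2*μ*M - 4*k) h2) B))) x).coeff N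
      = (if N = σ + ((∑ i, expE k (μ*M - k) (x.1 i))
            + ∑ j, expE (4*k) (2*μ*M - 4*k) (x.2 j))
         then (∏ i, (ε1:ℚ) ^ (x.1 i)) * ∏ j, (ε2:ℚ) ^ (x.2 j) else 0) := by
    intro x
    have h0 : ((HahnSeries.single σ (1:ℚ)) •
        (SummableFamily.smul (powFam (thetaFam ε1 k (μ*M - k) h1) A)
          (powFam (thetaFam ε2 (4*k) (2*μ*M - 4*k) h2) B))) x
        = HahnSeries.single σ (1:ℚ)
          * (powFam (thetaFam ε1 k (μ*M - k) h1) A x.1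
            * powFam (thetaFam ε2 (4*k) (2*μ*M - 4*k) h2) B x.2) := rfl
    rw [h0, powFam_apply (thetaFam ε1 k (μ*M - k) h1)
        (fun n => expE k (μ*M - k) n) (fun n => (ε1:ℚ) ^ n) (fun n => rfl) A x.1,
      powFam_apply (thetaFam ε2 (4*k) (2*μ*M - 4*k) h2)
        (fun n => expE (4*k) (2*μ*M - 4*k) n) (fun n => (ε2:ℚ) ^ n) (fun n => rfl) B x.2,
      HahnSeries.single_mul_single, HahnSeries.single_mul_single, one_mul,
      HahnSeries.coeff_single]
    split_ifs <;> rfl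
  rw [finsum_congr hPx]
  exact aux_vanish μ ℓ m k M σ N A B ε1 ε2 hm hM hσ hA hB hk hdvd hε

end ThetaVanish
end
end
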